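/- Let G be a matching covered graph. Then the perfect matching width of G is at most the maximum of the perfect matching widths of the bricks and braces of G. -/

import Mathlib

open SimpleGraph

/-- A graph is matching covered if it is connected and every edge lies in a
perfect matching. -/
def MatchingCovered {V : Type*} (G : SimpleGraph V) : Prop :=
  G.Connected ∧ ∀ e ∈ G.edgeSet, ∃ M : G.Subgraph, M.IsPerfectMatching ∧ e ∈ M.edgeSet

/-- The edge cut `∂(X)`: all edges of `G` with exactly one endpoint in `X`. -/
def cutEdges {V : Type*} (G : SimpleGraph V) (X : Set V) : Set (Sym2 V) :=
  {e | e ∈ G.edgeSet ∧ ∃ u v, e = s(u, v) ∧ u ∈ X ∧ v ∉ X}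

/-- The matching porosity of the cut `∂(X)`: the maximum number of edges of a
perfect matching of `G` crossing the cut. -/
noncomputable def matchingPorosity {V : Type*} (G : SimpleGraph V) (X : Set V) : ℕ :=
  sSup {n | ∃ M : G.Subgraph, M.IsPerfectMatching ∧ n = (M.edgeSet ∩ cutEdges G X).ncard}

/-- A cut is tight if every perfect matching contains exactly one of its edges. -/
def IsTightCut {V : Type*} (G : SimpleGraph V) (X : Set V) : Prop :=
  ∀ M : G.Subgraph, M.IsPerfectMatching → (M.edgeSet ∩ cutEdges G X).ncard = 1

/-- A tight cut is non-trivial if both shores have at least two vertices. -/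
def IsNontrivialTightCut {V : Type*} (G : SimpleGraph V) (X : Set V) : Prop :=
  IsTightCut G X ∧ 2 ≤ X.ncard ∧ 2 ≤ Xᶜ.ncard

/-- `A`, `B` form a bipartition of `G` into its two colour classes. -/
def IsBipartitionOf {V : Type*} (G : SimpleGraph V) (A B : Set V) : Prop :=
  A ∪ B = Set.univ ∧ Disjoint A B ∧
    ∀ ⦃u v⦄, G.Adj u v → (u ∈ A ∧ v ∈ B) ∨ (u ∈ B ∧ v ∈ A)

/-- A brace with colour classes `A` and `B`: a bipartite matching covered graph
without non-trivial tight cuts. -/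
def IsBraceWith {V : Type*} (G : SimpleGraph V) (A B : Set V) : Prop :=
  MatchingCovered G ∧ IsBipartitionOf G A B ∧ ∀ X : Set V, ¬ IsNontrivialTightCut G X

/-- The degree of a vertex, as the cardinality of its neighbour set. -/
noncomputable def ndeg {W : Type*} (T : SimpleGraph W) (v : W) : ℕ :=
  (T.neighborSet v).ncard

/-- A cubic tree: a tree all of whose vertices have degree 1 or 3. -/
def IsCubicTree {W : Type*} (T : SimpleGraph W) : Prop :=
  T.IsTree ∧ ∀ v, ndeg T v = 1 ∨ ndeg T v = 3

/-- The shore of the cut induced by the tree edge `t₁t₂`: all vertices of the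
graph mapped by `δ` to leaves of the component of `T - t₁t₂` containing `t₁`. -/
def treeShore {U W : Type*} (T : SimpleGraph W) (δ : U → W) (t₁ t₂ : W) : Set U :=
  {v | (T.deleteEdges {s(t₁, t₂)}).Reachable (δ v) t₁}

/-- The set of leaves of `T` contained in the component of `T - t₁t₂`
containing `t₁`. -/
def sideLeaves {W : Type*} (T : SimpleGraph W) (t₁ t₂ : W) : Set W :=
  {t | ndeg T t = 1 ∧ (T.deleteEdges {s(t₁, t₂)}).Reachable t t₁}

/-- An odd edge of a cubic tree: an edge of the spine (neither endpoint is a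
leaf) such that each of the two components of `T - e` contains an odd number of
leaves of `T`. -/
def IsOddEdge {W : Type*} (T : SimpleGraph W) (t₁ t₂ : W) : Prop :=
  T.Adj t₁ t₂ ∧ ndeg T t₁ ≠ 1 ∧ ndeg T t₂ ≠ 1 ∧
    Odd (sideLeaves T t₁ t₂).ncard ∧ Odd (sideLeaves T t₂ t₁).ncard

/-- The degree of a vertex within the spine of `T` (the tree `T` minus its
leaves): the number of its non-leaf neighbours. -/
noncomputable def spineDeg {W : Type*} (T : SimpleGraph W) (t : W) : ℕ :=
  {t' | T.Adj t t' ∧ ndeg T t' ≠ 1}.ncard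

/-- `(T, δ)` is a perfect matching decomposition of `G`: `T` is a cubic tree
and `δ` is a bijection between the leaves of `T` and the vertices of `G`. -/
def IsPMDecomp {V : Type*} (G : SimpleGraph V) {n : ℕ} (T : SimpleGraph (Fin n))
    (δ : V → Fin n) : Prop :=
  IsCubicTree T ∧ Function.Injective δ ∧ (∀ v, ndeg T (δ v) = 1) ∧
    ∀ t, ndeg T t = 1 → ∃ v, δ v = t

/-- The width of a PM-decomposition: the maximum matching porosity of a cut
induced by an edge of the tree. -/
noncomputable def decompWidth {V : Type*} (G : SimpleGraph V) {n : ℕ}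
    (T : SimpleGraph (Fin n)) (δ : V → Fin n) : ℕ :=
  sSup {k | ∃ t₁ t₂, T.Adj t₁ t₂ ∧ k = matchingPorosity G (treeShore T δ t₁ t₂)}

/-- The perfect matching width of `G`: the minimum width of a perfect matching
decomposition of `G`. -/
noncomputable def pmw {V : Type*} (G : SimpleGraph V) : ℕ :=
  sInf {k | ∃ (n : ℕ) (T : SimpleGraph (Fin n)) (δ : V → Fin n),
    IsPMDecomp G T δ ∧ decompWidth G T δ = k}

instance optionFinite {α : Type*} [Finite α] : Finite (Option α) := by
  have := Fintype.ofFinite α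
  infer_instance

/-- The tight cut contraction: identify the shore `Z` into a single contraction
vertex (represented by `none`) and delete parallel edges and loops. -/
def contractShore {V : Type*} (G : SimpleGraph V) (Z : Set V) :
    SimpleGraph (Option {v : V // v ∉ Z}) :=
  SimpleGraph.fromRel fun a b =>
    match a, b with
    | some u, some w => G.Adj u w
    | some u, none => ∃ z ∈ Z, G.Adj u z
    | _, _ => False

/-- A bundled finite simple graph. -/
structure FinGraph where
  {carrier : Type}
  [fin : Finite carrier]
  graph : SimpleGraph carrier

instance (G : FinGraph) : Finite G.carrier := G.fin

/-- `H` is one of the bricks and braces of `G`: one of the graphs obtained from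
`G` by iterated tight cut contractions along non-trivial tight cuts, until no
non-trivial tight cut remains. -/
inductive IsBrickOrBraceOf : FinGraph → FinGraph → Prop
  | base (G : FinGraph) (h : ∀ Z : Set G.carrier, ¬ IsNontrivialTightCut G.graph Z) :
      IsBrickOrBraceOf G G
  | step (H G : FinGraph) (Z : Set G.carrier) (h : IsNontrivialTightCut G.graph Z)
      (h2 : IsBrickOrBraceOf H ⟨contractShore G.graph Z⟩) : IsBrickOrBraceOf H G

section Tools

variable {A B : Type*}

lemma reachable_closed {H : SimpleGraph A} {S : Set A}
    (hS : ∀ x ∈ S, ∀ y, H.Adj x y → y ∈ S) :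
    ∀ {u v : A}, u ∈ S → H.Reachable u v → v ∈ S := by
  have key : ∀ {u v : A} (p : H.Walk u v), u ∈ S → v ∈ S := by
    intro u v p
    induction p with
    | nil => exact id
    | cons hab p ih => exact fun hu => ih (hS _ hu _ hab)
  intro u v hu h
  exact h.elim fun p => key p hu

lemma reachable_map' {H₁ : SimpleGraph A} {H₂ : SimpleGraph B} (φ : A → B)
    (hφ : ∀ x y, H₁.Adj x y → H₂.Adj (φ x) (φ y) ∨ φ x = φ y) {u v : A}
    (h : H₁.Reachable u v) : H₂.Reachable (φ u) (φ v) := by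
  obtain ⟨p⟩ := h
  induction p with
  | nil => exact SimpleGraph.Reachable.refl _
  | cons hab p ih =>
    rcases hφ _ _ hab with h' | h'
    · exact (h'.reachable).trans ih
    · rw [h']; exact ih

lemma nat_sSup_le {s : Set ℕ} {m : ℕ} (h : ∀ n ∈ s, n ≤ m) : sSup s ≤ m := by
  rcases s.eq_empty_or_nonempty with rfl | hne
  · simp
  · exact csSup_le hne h

lemma nat_le_sSup {s : Set ℕ} (hbdd : BddAbove s) {a : ℕ} (ha : a ∈ s) : a ≤ sSup s :=
  le_csSup hbdd ha

lemma isBridge_iff' {G : SimpleGraph A} {u v : A} (hadj : G.Adj u v) :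
    G.IsBridge s(u, v) ↔ G.Adj u v ∧ ¬(G.deleteEdges {s(u, v)}).Reachable u v :=
  ⟨fun h => ⟨hadj, SimpleGraph.isBridge_iff.mp h⟩, fun h => SimpleGraph.isBridge_iff.mpr h.2⟩

end Tools

section PorosityTools

variable {V : Type*} [Finite V] {G : SimpleGraph V}

lemma ncard_le_card_sym2 (S : Set (Sym2 V)) : S.ncard ≤ Nat.card (Sym2 V) := by
  rw [← Set.ncard_univ]
  exact Set.ncard_le_ncard (Set.subset_univ _) Set.finite_univ

lemma matchingPorosity_le_card (X : Set V) :
    matchingPorosity G X ≤ Nat.card (Sym2 V) := by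
  apply nat_sSup_le
  rintro n ⟨M, _, rfl⟩
  exact ncard_le_card_sym2 _

lemma le_matchingPorosity {X : Set V} {M : G.Subgraph} (hM : M.IsPerfectMatching) :
    (M.edgeSet ∩ cutEdges G X).ncard ≤ matchingPorosity G X :=
  nat_le_sSup ⟨Nat.card (Sym2 V), by rintro x ⟨M', _, rfl⟩; exact ncard_le_card_sym2 _⟩
    ⟨M, hM, rfl⟩

lemma matchingPorosity_le {X : Set V} {m : ℕ}
    (h : ∀ M : G.Subgraph, M.IsPerfectMatching → (M.edgeSet ∩ cutEdges G X).ncard ≤ m) :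
    matchingPorosity G X ≤ m := by
  apply nat_sSup_le
  rintro n ⟨M, hM, rfl⟩
  exact h M hM

end PorosityTools

section GenDecomp

variable {V W : Type*}

/-- `IsPMDecomp` over an arbitrary leaf-indexing type. -/
def IsPMTree (T : SimpleGraph W) (δ : V → W) : Prop :=
  IsCubicTree T ∧ Function.Injective δ ∧ (∀ v, ndeg T (δ v) = 1) ∧
    ∀ t, ndeg T t = 1 → ∃ v, δ v = t

noncomputable def decompWidthOn (G : SimpleGraph V) (T : SimpleGraph W) (δ : V → W) : ℕ :=
  sSup {k | ∃ t₁ t₂, T.Adj t₁ t₂ ∧ k = matchingPorosity G (treeShore T δ t₁ t₂)}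

lemma ndeg_comap_equiv (e : W ≃ B) (T : SimpleGraph W) (t : W) :
    ndeg (SimpleGraph.comap (e.symm : B → W) T) (e t) = ndeg T t := by
  unfold ndeg
  have : (SimpleGraph.comap (e.symm : B → W) T).neighborSet (e t) =
      e '' T.neighborSet t := by
    ext b
    simp only [SimpleGraph.mem_neighborSet, SimpleGraph.comap_adj, Equiv.symm_apply_apply,
      Set.mem_image]
    constructor
    · intro h; exact ⟨e.symm b, h, by simp⟩
    · rintro ⟨w, hw, rfl⟩; simpa using hw
  rw [this, Set.ncard_image_of_injective _ e.injective]

lemma reachable_deleteEdges_comap_equiv (e : W ≃ B) (T : SimpleGraph W) (t₁ t₂ u v : W) :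
    ((SimpleGraph.comap (e.symm : B → W) T).deleteEdges {s(e t₁, e t₂)}).Reachable (e u) (e v) ↔
      (T.deleteEdges {s(t₁, t₂)}).Reachable u v := by
  constructor
  · intro h
    have := reachable_map' (H₁ := (SimpleGraph.comap (e.symm : B → W) T).deleteEdges
        {s(e t₁, e t₂)}) (H₂ := T.deleteEdges {s(t₁, t₂)}) (e.symm) ?_ h
    · simpa using this
    · intro x y hxy
      rw [SimpleGraph.deleteEdges_adj] at hxy ⊢
      left
      refine ⟨hxy.1, fun hc => hxy.2 ?_⟩
      simp only [Set.mem_singleton_iff] at hc ⊢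
      have := congrArg (Sym2.map e) hc
      simpa using this
  · intro h
    apply reachable_map' (H₁ := T.deleteEdges {s(t₁, t₂)}) e ?_ h
    intro x y hxy
    rw [SimpleGraph.deleteEdges_adj] at hxy ⊢
    left
    constructor
    · simpa using hxy.1
    · intro hc
      apply hxy.2
      simp only [Set.mem_singleton_iff] at hc ⊢
      have := congrArg (Sym2.map e.symm) hc
      simpa using this

lemma isTree_comap_equiv (e : W ≃ B) {T : SimpleGraph W} (hT : T.IsTree) :
    (SimpleGraph.comap (e.symm : B → W) T).IsTree := by
  set T' := SimpleGraph.comap (e.symm : B → W) T with hT'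
  constructor
  · have hne : Nonempty W := hT.isConnected.nonempty
    haveI : Nonempty B := Nonempty.map e hne
    apply SimpleGraph.Connected.mk
    intro a b
    have h := hT.isConnected.preconnected (e.symm a) (e.symm b)
    have := reachable_map' (H₁ := T) (H₂ := T') e ?_ h
    · simpa using this
    · intro x y hxy
      left
      simpa [hT'] using hxy
  · rw [SimpleGraph.isAcyclic_iff_forall_adj_isBridge]
    intro a b hab
    rw [isBridge_iff' hab]
    refine ⟨hab, fun hreach => ?_⟩
    have h2 := reachable_map' (H₁ := T'.deleteEdges {s(a, b)})
      (H₂ := T.deleteEdges {s(e.symm a, e.symm b)}) (e.symm) ?_ hreach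
    · have hadj : T.Adj (e.symm a) (e.symm b) := hab
      have := (SimpleGraph.isAcyclic_iff_forall_adj_isBridge.mp hT.IsAcyclic) hadj
      rw [isBridge_iff' hadj] at this
      exact this.2 h2
    · intro x y hxy
      rw [SimpleGraph.deleteEdges_adj] at hxy ⊢
      left
      refine ⟨hxy.1, fun hc => hxy.2 ?_⟩
      simp only [Set.mem_singleton_iff] at hc ⊢
      have := congrArg (Sym2.map e) hc
      simpa using this

lemma transport_decomp [Finite V] [Fintype W] (G : SimpleGraph V) (T : SimpleGraph W)
    (δ : V → W) (h : IsPMTree T δ) :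
    ∃ (n : ℕ) (T' : SimpleGraph (Fin n)) (δ' : V → Fin n),
      IsPMDecomp G T' δ' ∧ decompWidth G T' δ' = decompWidthOn G T δ := by
  obtain ⟨⟨hTree, hdeg⟩, hinj, hleaf, hsurj⟩ := h
  set n := Fintype.card W with hn
  set e : W ≃ Fin n := Fintype.equivFin W with he
  set T' : SimpleGraph (Fin n) := SimpleGraph.comap (e.symm : Fin n → W) T with hT'
  set δ' : V → Fin n := fun v => e (δ v) with hδ'
  refine ⟨n, T', δ', ⟨⟨isTree_comap_equiv e hTree, ?_⟩, ?_, ?_, ?_⟩, ?_⟩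
  · intro t
    have := hdeg (e.symm t)
    have h2 : ndeg T' t = ndeg T (e.symm t) := by
      have := ndeg_comap_equiv e T (e.symm t)
      simpa using this
    rw [h2]; exact this
  · intro u v huv
    exact hinj (e.injective (huv : e (δ u) = e (δ v)))
  · intro v
    rw [hδ', ndeg_comap_equiv e T (δ v)]
    exact hleaf v
  · intro t ht
    have h2 : ndeg T' t = ndeg T (e.symm t) := by
      have := ndeg_comap_equiv e T (e.symm t); simpa using this
    rw [h2] at ht
    obtain ⟨v, hv⟩ := hsurj _ ht
    exact ⟨v, by simp [hδ', hv]⟩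
  · have hshore : ∀ t₁ t₂ : W, treeShore T' δ' (e t₁) (e t₂) = treeShore T δ t₁ t₂ := by
      intro t₁ t₂
      ext v
      exact reachable_deleteEdges_comap_equiv e T t₁ t₂ (δ v) t₁
    unfold decompWidth decompWidthOn
    congr 1
    ext k
    constructor
    · rintro ⟨t₁, t₂, hadj, rfl⟩
      refine ⟨e.symm t₁, e.symm t₂, hadj, ?_⟩
      have := hshore (e.symm t₁) (e.symm t₂)
      simp only [Equiv.apply_symm_apply] at this
      rw [this]
    · rintro ⟨t₁, t₂, hadj, rfl⟩
      refine ⟨e t₁, e t₂, by simpa [hT'] using hadj, ?_⟩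
      rw [hshore t₁ t₂]

lemma pmw_le_decompWidthOn [Finite V] [Finite W] (G : SimpleGraph V) (T : SimpleGraph W)
    (δ : V → W) (h : IsPMTree T δ) : pmw G ≤ decompWidthOn G T δ := by
  have : Fintype W := Fintype.ofFinite W
  obtain ⟨n, T', δ', hd, hw⟩ := transport_decomp G T δ h
  exact hw ▸ Nat.sInf_le ⟨n, T', δ', hd, rfl⟩

end GenDecomp
section AttachTree

variable {W' : Type*} (T' : SimpleGraph W') (ℓ : W')

/-- Attach two pendant vertices to the vertex `ℓ`. -/
def attach : SimpleGraph (W' ⊕ Bool) :=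
  SimpleGraph.fromRel (fun a b =>
    match a, b with
    | Sum.inl a, Sum.inl b => T'.Adj a b
    | Sum.inl a, Sum.inr _ => a = ℓ
    | _, _ => False)

variable {T' ℓ}

@[simp] lemma attach_adj_inl_inl {a b : W'} :
    (attach T' ℓ).Adj (Sum.inl a) (Sum.inl b) ↔ T'.Adj a b := by
  unfold attach
  rw [SimpleGraph.fromRel_adj]
  constructor
  · rintro ⟨hne, h | h⟩
    · exact h
    · exact h.symm
  · intro h
    exact ⟨by simpa using h.ne, Or.inl h⟩

@[simp] lemma attach_adj_inl_inr {a : W'} {x : Bool} :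
    (attach T' ℓ).Adj (Sum.inl a) (Sum.inr x) ↔ a = ℓ := by
  unfold attach
  rw [SimpleGraph.fromRel_adj]
  constructor
  · rintro ⟨hne, h | h⟩
    · exact h
    · exact h.elim
  · intro h
    exact ⟨by simp, Or.inl h⟩

@[simp] lemma attach_adj_inr_inl {a : W'} {x : Bool} :
    (attach T' ℓ).Adj (Sum.inr x) (Sum.inl a) ↔ a = ℓ := by
  rw [SimpleGraph.adj_comm]; exact attach_adj_inl_inr

@[simp] lemma attach_adj_inr_inr {x y : Bool} :
    ¬ (attach T' ℓ).Adj (Sum.inr x) (Sum.inr y) := by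
  unfold attach
  rw [SimpleGraph.fromRel_adj]
  rintro ⟨hne, h | h⟩ <;> exact h

lemma attach_neighborSet_inl {a : W'} (ha : a ≠ ℓ) :
    (attach T' ℓ).neighborSet (Sum.inl a) = Sum.inl '' T'.neighborSet a := by
  ext w
  cases w with
  | inl b => simp [SimpleGraph.mem_neighborSet]
  | inr x => simp [SimpleGraph.mem_neighborSet, ha]

lemma attach_neighborSet_center :
    (attach T' ℓ).neighborSet (Sum.inl ℓ) =
      Sum.inl '' T'.neighborSet ℓ ∪ {Sum.inr true, Sum.inr false} := by
  ext w
  cases w with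
  | inl b => simp [SimpleGraph.mem_neighborSet]
  | inr x => cases x <;> simp [SimpleGraph.mem_neighborSet]

lemma attach_neighborSet_inr (x : Bool) :
    (attach T' ℓ).neighborSet (Sum.inr x) = {Sum.inl ℓ} := by
  ext w
  cases w with
  | inl b =>
    simp only [SimpleGraph.mem_neighborSet, attach_adj_inr_inl, Set.mem_singleton_iff,
      Sum.inl.injEq]
  | inr y => simp [SimpleGraph.mem_neighborSet]

variable [Finite W']

lemma ndeg_attach_inl {a : W'} (ha : a ≠ ℓ) :
    ndeg (attach T' ℓ) (Sum.inl a) = ndeg T' a := by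
  unfold ndeg
  rw [attach_neighborSet_inl ha, Set.ncard_image_of_injective _ Sum.inl_injective]

lemma ndeg_attach_center :
    ndeg (attach T' ℓ) (Sum.inl ℓ) = ndeg T' ℓ + 2 := by
  unfold ndeg
  rw [attach_neighborSet_center,
    Set.ncard_union_eq (Set.disjoint_left.mpr (by rintro x ⟨w, _, rfl⟩; simp)),
    Set.ncard_image_of_injective _ Sum.inl_injective, Set.ncard_pair (by simp)]

lemma ndeg_attach_inr (x : Bool) : ndeg (attach T' ℓ) (Sum.inr x) = 1 := by
  unfold ndeg
  rw [attach_neighborSet_inr]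
  simp

lemma attach_connected (hT' : T'.Connected) : (attach T' ℓ).Connected := by
  have hreach : ∀ w : W' ⊕ Bool, (attach T' ℓ).Reachable w (Sum.inl ℓ) := by
    intro w
    cases w with
    | inl a =>
      exact reachable_map' Sum.inl (fun x y hxy => Or.inl (by simpa using hxy))
        (hT'.preconnected a ℓ)
    | inr x => exact ((attach_adj_inr_inl).mpr rfl).reachable
  haveI : Nonempty (W' ⊕ Bool) := ⟨Sum.inl ℓ⟩
  exact SimpleGraph.Connected.mk fun u v => (hreach u).trans (hreach v).symm

lemma attach_acyclic (hT' : T'.IsAcyclic) : (attach T' ℓ).IsAcyclic := by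
  rw [SimpleGraph.isAcyclic_iff_forall_adj_isBridge]
  have pendant : ∀ (x : Bool) (a : W') (ha : a = ℓ),
      ¬ ((attach T' ℓ).deleteEdges {s(Sum.inl a, Sum.inr x)}).Reachable
        (Sum.inl a) (Sum.inr x) := by
    intro x a ha hr
    have := reachable_closed (H := (attach T' ℓ).deleteEdges {s(Sum.inl a, Sum.inr x)})
      (S := {w | w ≠ Sum.inr x}) ?_ (by simp : (Sum.inl a : W' ⊕ Bool) ∈ _) hr
    · exact this rfl
    · rintro w hw y hy
      rw [SimpleGraph.deleteEdges_adj] at hy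
      intro hyx
      subst hyx
      cases w with
      | inl c =>
        have hc : c = ℓ := by simpa using hy.1
        apply hy.2
        simp [Set.mem_singleton_iff, hc, ha]
      | inr z => exact attach_adj_inr_inr hy.1
  intro u v hadj
  rw [isBridge_iff' hadj]
  refine ⟨hadj, ?_⟩
  cases u with
  | inl a =>
    cases v with
    | inl b =>
      have hab : T'.Adj a b := by simpa using hadj
      intro hr
      set π : W' ⊕ Bool → W' := Sum.elim id (fun _ => ℓ) with hπ
      have h2 := reachable_map' (H₂ := T'.deleteEdges {s(a, b)}) π ?_ hr
      · have hbr := (SimpleGraph.isAcyclic_iff_forall_adj_isBridge.mp hT') hab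
        rw [isBridge_iff' hab] at hbr
        exact hbr.2 (by simpa [hπ] using h2)
      · intro x y hxy
        rw [SimpleGraph.deleteEdges_adj] at hxy
        cases x with
        | inl c =>
          cases y with
          | inl d =>
            left
            rw [SimpleGraph.deleteEdges_adj]
            refine ⟨by simpa [hπ] using hxy.1, fun hc => hxy.2 ?_⟩
            simp only [Set.mem_singleton_iff, hπ, Sum.elim_inl] at hc
            simp only [Set.mem_singleton_iff]
            simpa using congrArg (Sym2.map (@Sum.inl W' Bool)) hc
          | inr z =>
            right
            have : c = ℓ := by simpa using hxy.1
            simp [hπ, this]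
        | inr z =>
          cases y with
          | inl d =>
            right
            have : d = ℓ := by simpa using hxy.1
            simp [hπ, this]
          | inr z' => exact absurd hxy.1 attach_adj_inr_inr
    | inr x =>
      exact pendant x a (by simpa using hadj)
  | inr x =>
    cases v with
    | inl a =>
      have ha : a = ℓ := by simpa using hadj
      intro hr
      have : s(Sum.inr x, Sum.inl a) = s(Sum.inl a, Sum.inr x) := Sym2.eq_swap
      rw [this] at hr
      exact pendant x a ha hr.symm
    | inr y => exact absurd hadj attach_adj_inr_inr

end AttachTree

section ExistsDecomp

lemma exists_pmtree (m : ℕ) (hm : 2 ≤ m) :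
    ∀ (V : Type) [Fintype V], Fintype.card V = m →
      ∃ (W : Type) (_ : Fintype W) (T : SimpleGraph W) (δ : V → W), IsPMTree T δ := by
  induction m, hm using Nat.le_induction with
  | base =>
    intro V _ hcard
    haveI : Nonempty V := Fintype.card_pos_iff.mp (by omega)
    have hdeg : ∀ v : V, ndeg (⊤ : SimpleGraph V) v = 1 := by
      intro v
      have hns : (⊤ : SimpleGraph V).neighborSet v = {v}ᶜ := by
        ext w
        simp [SimpleGraph.mem_neighborSet, ne_comm]
      have h2 := Set.ncard_add_ncard_compl ({v} : Set V)
      rw [Set.ncard_singleton, Nat.card_eq_fintype_card, hcard] at h2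
      unfold ndeg
      rw [hns]
      omega
    refine ⟨V, inferInstance, ⊤, id, ⟨⟨?_, fun v => Or.inl (hdeg v)⟩, fun a b h => h,
      fun v => hdeg v, fun t _ => ⟨t, rfl⟩⟩⟩
    constructor
    · exact SimpleGraph.connected_top
    · intro v c hc
      have h3 := hc.three_le_length
      have hnd := hc.support_nodup
      have hle := hnd.length_le_card
      have hlen : c.support.tail.length = c.length := by
        have := c.length_support
        simp only [List.length_tail, this]
        omega
      omega
  | succ m hm IH =>
    intro V _ hcard
    classical
    haveI : Nonempty V := Fintype.card_pos_iff.mp (by omega)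
    obtain ⟨v₀⟩ := ‹Nonempty V›
    have hcard' : Fintype.card {v : V // v ≠ v₀} = m := by
      have h1 := Fintype.card_subtype_compl (fun v : V => v = v₀)
      rw [Fintype.card_subtype_eq, hcard] at h1
      simpa using h1
    obtain ⟨W', hW'fin, T', δ', hT⟩ := IH {v : V // v ≠ v₀} hcard'
    haveI := hW'fin
    obtain ⟨⟨hTree, hdeg13⟩, hinj, hleafdeg, hsurj⟩ := hT
    haveI : Nonempty {v : V // v ≠ v₀} := Fintype.card_pos_iff.mp (by omega)
    obtain ⟨v₁⟩ := ‹Nonempty {v : V // v ≠ v₀}›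
    have hnecenter : ∀ x : {v : V // v ≠ v₀}, x ≠ v₁ → δ' x ≠ δ' v₁ :=
      fun x hx h => hx (hinj h)
    refine ⟨W' ⊕ Bool, inferInstance, attach T' (δ' v₁),
      fun v => if h : v = v₀ then Sum.inr true
        else if (⟨v, h⟩ : {v : V // v ≠ v₀}) = v₁ then Sum.inr false
        else Sum.inl (δ' ⟨v, h⟩), ⟨⟨?_, ?_⟩, ?_, ?_, ?_⟩⟩
    · exact ⟨attach_connected hTree.isConnected, attach_acyclic hTree.IsAcyclic⟩
    · intro w
      cases w with
      | inl a =>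
        by_cases ha : a = δ' v₁
        · right
          rw [ha, ndeg_attach_center, hleafdeg v₁]
        · rw [ndeg_attach_inl ha]
          exact hdeg13 a
      | inr x => exact Or.inl (ndeg_attach_inr x)
    · intro u v huv
      by_cases hu : u = v₀ <;> by_cases hv : v = v₀
      · rw [hu, hv]
      · simp only [dif_pos hu, dif_neg hv] at huv
        split_ifs at huv
        · exact absurd huv (by simp)
      · simp only [dif_neg hu, dif_pos hv] at huv
        split_ifs at huv
        · exact absurd huv (by simp)
      · simp only [dif_neg hu, dif_neg hv] at huv
        by_cases h1 : (⟨u, hu⟩ : {v : V // v ≠ v₀}) = v₁ <;>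
          by_cases h2 : (⟨v, hv⟩ : {v : V // v ≠ v₀}) = v₁
        · exact congrArg Subtype.val (h1.trans h2.symm)
        · rw [if_pos h1, if_neg h2] at huv
          exact absurd huv (by simp)
        · rw [if_neg h1, if_pos h2] at huv
          exact absurd huv (by simp)
        · rw [if_neg h1, if_neg h2] at huv
          exact congrArg Subtype.val (hinj (Sum.inl_injective huv))
    · intro v
      by_cases hv : v = v₀
      · simp only [dif_pos hv]
        exact ndeg_attach_inr true
      · simp only [dif_neg hv]
        by_cases h1 : (⟨v, hv⟩ : {v : V // v ≠ v₀}) = v₁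
        · simp only [if_pos h1]
          exact ndeg_attach_inr false
        · simp only [if_neg h1]
          rw [ndeg_attach_inl (hnecenter _ h1)]
          exact hleafdeg _
    · intro t ht
      cases t with
      | inl a =>
        have ha : a ≠ δ' v₁ := by
          intro hc
          rw [hc, ndeg_attach_center, hleafdeg v₁] at ht
          omega
        rw [ndeg_attach_inl ha] at ht
        obtain ⟨x, hx⟩ := hsurj a ht
        have hxne : x ≠ v₁ := by
          intro hc
          rw [hc] at hx
          exact ha hx.symm
        refine ⟨x.1, ?_⟩
        simp only [dif_neg x.2, Subtype.coe_eta]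
        rw [if_neg hxne, hx]
      | inr x =>
        cases x with
        | true => exact ⟨v₀, dif_pos rfl⟩
        | false =>
          refine ⟨v₁.1, ?_⟩
          simp [dif_neg v₁.2, Subtype.coe_eta]

lemma pmw_set_nonempty {V : Type} [Finite V] (G : SimpleGraph V) (h2 : 2 ≤ Nat.card V) :
    {k | ∃ (n : ℕ) (T : SimpleGraph (Fin n)) (δ : V → Fin n),
      IsPMDecomp G T δ ∧ decompWidth G T δ = k}.Nonempty := by
  haveI := Fintype.ofFinite V
  obtain ⟨W, hWfin, T, δ, hT⟩ := exists_pmtree (Fintype.card V)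
    (by rwa [Nat.card_eq_fintype_card] at h2) V rfl
  haveI := hWfin
  obtain ⟨n, T', δ', hd, hw⟩ := transport_decomp G T δ hT
  exact ⟨_, n, T', δ', hd, rfl⟩

end ExistsDecomp
section ContractTransfer

variable {V : Type*} [Finite V] {G : SimpleGraph V} {Z : Set V}

open Classical in
/-- The quotient map onto the shore contraction. -/
noncomputable def shoreMap (Z : Set V) (v : V) : Option {x : V // x ∉ Z} :=
  if h : v ∈ Z then none else some ⟨v, h⟩

lemma shoreMap_of_mem {v : V} (h : v ∈ Z) : shoreMap Z v = none := by
  unfold shoreMap; exact dif_pos h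

lemma shoreMap_of_not_mem {v : V} (h : v ∉ Z) : shoreMap Z v = some ⟨v, h⟩ := by
  unfold shoreMap; exact dif_neg h

lemma shoreMap_eq_some {v : V} {u : {x : V // x ∉ Z}} (h : shoreMap Z v = some u) : v = u.1 := by
  by_cases hv : v ∈ Z
  · rw [shoreMap_of_mem hv] at h; exact absurd h (by simp)
  · rw [shoreMap_of_not_mem hv] at h
    exact congrArg Subtype.val (Option.some_injective _ h)

lemma shoreMap_eq_none {v : V} (h : shoreMap Z v = none) : v ∈ Z := by
  by_cases hv : v ∈ Z
  · exact hv
  · rw [shoreMap_of_not_mem hv] at h; exact absurd h (by simp)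

lemma shoreMap_eq_cases {x y : V} (h : shoreMap Z x = shoreMap Z y) :
    x = y ∨ (x ∈ Z ∧ y ∈ Z) := by
  by_cases hx : x ∈ Z <;> by_cases hy : y ∈ Z
  · exact Or.inr ⟨hx, hy⟩
  · rw [shoreMap_of_mem hx, shoreMap_of_not_mem hy] at h; exact absurd h (by simp)
  · rw [shoreMap_of_not_mem hx, shoreMap_of_mem hy] at h; exact absurd h (by simp)
  · rw [shoreMap_of_not_mem hx, shoreMap_of_not_mem hy] at h
    exact Or.inl (congrArg Subtype.val (Option.some_injective _ h))

lemma shoreMap_surjective (hZ : Z.Nonempty) : Function.Surjective (shoreMap Z) := by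
  rintro (_ | u)
  · exact ⟨hZ.choose, shoreMap_of_mem hZ.choose_spec⟩
  · exact ⟨u.1, shoreMap_of_not_mem u.2⟩

lemma exists_crossing (hZ : IsTightCut G Z) {M : G.Subgraph} (hM : M.IsPerfectMatching) :
    ∃ u₀ z₀ : V, u₀ ∉ Z ∧ z₀ ∈ Z ∧ M.Adj u₀ z₀ ∧
      ∀ u z, u ∉ Z → z ∈ Z → M.Adj u z → u = u₀ ∧ z = z₀ := by
  obtain ⟨e₀, he₀⟩ := Set.ncard_eq_one.mp (hZ M hM)
  have he₀mem : e₀ ∈ M.edgeSet ∩ cutEdges G Z := by rw [he₀]; rfl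
  obtain ⟨heM, -, a, b, heq, haZ, hbZ⟩ := he₀mem
  subst heq
  have hab : M.Adj a b := heM
  refine ⟨b, a, hbZ, haZ, hab.symm, ?_⟩
  intro u z hu hz huz
  have hmem : s(u, z) ∈ M.edgeSet ∩ cutEdges G Z := by
    refine ⟨huz, ?_, z, u, Sym2.eq_swap, hz, hu⟩
    exact M.adj_sub huz
  rw [he₀, Set.mem_singleton_iff] at hmem
  rcases Sym2.eq_iff.mp hmem with ⟨rfl, rfl⟩ | ⟨rfl, rfl⟩
  · exact absurd hz hbZ
  · exact ⟨rfl, rfl⟩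

noncomputable def contractPM (G : SimpleGraph V) (Z : Set V) (M : G.Subgraph)
    (u₀ z₀ : V) (hu₀ : u₀ ∉ Z) (hz₀ : z₀ ∈ Z) (hadj₀ : M.Adj u₀ z₀) :
    (contractShore G Z).Subgraph where
  verts := Set.univ
  Adj a b := match a, b with
    | some u, some w => M.Adj u.1 w.1
    | some u, none => u.1 = u₀
    | none, some u => u.1 = u₀
    | none, none => False
  adj_sub := by
    rintro (_ | u) (_ | w) h
    · exact h.elim
    · unfold contractShore
      rw [SimpleGraph.fromRel_adj]
      exact ⟨by simp, Or.inr ⟨z₀, hz₀, h ▸ M.adj_sub hadj₀⟩⟩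
    · unfold contractShore
      rw [SimpleGraph.fromRel_adj]
      exact ⟨by simp, Or.inl ⟨z₀, hz₀, h ▸ M.adj_sub hadj₀⟩⟩
    · unfold contractShore
      rw [SimpleGraph.fromRel_adj]
      have hne : u ≠ w := fun hc => (M.adj_sub h).ne (by rw [hc])
      refine ⟨?_, Or.inl (M.adj_sub h)⟩
      simpa [Subtype.ext_iff] using fun hc => hne (Subtype.ext hc)
  edge_vert _ := Set.mem_univ _
  symm := by
    refine ⟨?_⟩
    rintro (_ | u) (_ | w) h
    · exact h.elim
    · exact h
    · exact h
    · exact h.symm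

variable {M : G.Subgraph} {u₀ z₀ : V} {hu₀ : u₀ ∉ Z} {hz₀ : z₀ ∈ Z} {hadj₀ : M.Adj u₀ z₀}

@[simp] lemma contractPM_adj_some_some {u w : {x : V // x ∉ Z}} :
    (contractPM G Z M u₀ z₀ hu₀ hz₀ hadj₀).Adj (some u) (some w) ↔ M.Adj u.1 w.1 := Iff.rfl

@[simp] lemma contractPM_adj_some_none {u : {x : V // x ∉ Z}} :
    (contractPM G Z M u₀ z₀ hu₀ hz₀ hadj₀).Adj (some u) none ↔ u.1 = u₀ := Iff.rfl

@[simp] lemma contractPM_adj_none_some {u : {x : V // x ∉ Z}} :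
    (contractPM G Z M u₀ z₀ hu₀ hz₀ hadj₀).Adj none (some u) ↔ u.1 = u₀ := Iff.rfl

@[simp] lemma contractPM_adj_none_none :
    ¬ (contractPM G Z M u₀ z₀ hu₀ hz₀ hadj₀).Adj none none := fun h => h.elim

lemma contractPM_isPerfectMatching (hM : M.IsPerfectMatching)
    (huniq : ∀ u z, u ∉ Z → z ∈ Z → M.Adj u z → u = u₀ ∧ z = z₀) :
    (contractPM G Z M u₀ z₀ hu₀ hz₀ hadj₀).IsPerfectMatching := by
  rw [SimpleGraph.Subgraph.isPerfectMatching_iff]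
  rintro (_ | u)
  · refine ⟨some ⟨u₀, hu₀⟩, rfl, ?_⟩
    rintro (_ | u) h
    · exact absurd h contractPM_adj_none_none
    · exact congrArg some (Subtype.ext (contractPM_adj_none_some.mp h))
  · obtain ⟨w, hw, hwu⟩ := SimpleGraph.Subgraph.isPerfectMatching_iff.mp hM u.1
    by_cases hwZ : w ∈ Z
    · refine ⟨none, contractPM_adj_some_none.mpr (huniq u.1 w u.2 hwZ hw).1, ?_⟩
      rintro (_ | w') h
      · rfl
      · exfalso
        have hww : w'.val = w := hwu _ (contractPM_adj_some_some.mp h)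
        exact w'.2 (hww ▸ hwZ)
    · refine ⟨some ⟨w, hwZ⟩, contractPM_adj_some_some.mpr hw, ?_⟩
      rintro (_ | w') h
      · exfalso
        have hu : u.1 = u₀ := contractPM_adj_some_none.mp h
        have hzw : z₀ = w := hwu _ (by rw [hu]; exact hadj₀)
        exact hwZ (hzw ▸ hz₀)
      · exact congrArg some (Subtype.ext (hwu _ (contractPM_adj_some_some.mp h)))

lemma porosity_transfer (hZne : Z.Nonempty) (hZ : IsTightCut G Z) (X : Set V)
    (hX : Z ⊆ X ∨ Disjoint Z X) :
    matchingPorosity G X ≤ matchingPorosity (contractShore G Z) (shoreMap Z '' X) := by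
  apply matchingPorosity_le
  intro M hM
  obtain ⟨u₀, z₀, hu₀, hz₀, hadj₀, huniq⟩ := exists_crossing hZ hM
  set M₁ := contractPM G Z M u₀ z₀ hu₀ hz₀ hadj₀ with hM₁def
  have hM₁pm : M₁.IsPerfectMatching := contractPM_isPerfectMatching hM huniq
  have hsep : ∀ {x y : V}, x ∈ X → y ∉ X → shoreMap Z x = shoreMap Z y → False := by
    intro x y hx hy h
    rcases shoreMap_eq_cases h with rfl | ⟨hxZ, hyZ⟩
    · exact hy hx
    · rcases hX with hX | hX
      · exact hy (hX hyZ)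
      · exact Set.disjoint_left.mp hX hxZ hx
  have hmapsto : ∀ e ∈ M.edgeSet ∩ cutEdges G X,
      Sym2.map (shoreMap Z) e ∈ M₁.edgeSet ∩ cutEdges (contractShore G Z) (shoreMap Z '' X) := by
    rintro e ⟨heM, -, u, v, rfl, huX, hvX⟩
    have huv : M.Adj u v := heM
    have hM₁uv : M₁.Adj (shoreMap Z u) (shoreMap Z v) := by
      by_cases huZ : u ∈ Z <;> by_cases hvZ : v ∈ Z
      · exfalso
        rcases hX with hX | hX
        · exact hvX (hX hvZ)
        · exact Set.disjoint_left.mp hX huZ huX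
      · rw [shoreMap_of_mem huZ, shoreMap_of_not_mem hvZ]
        exact contractPM_adj_none_some.mpr (huniq v u hvZ huZ huv.symm).1
      · rw [shoreMap_of_not_mem huZ, shoreMap_of_mem hvZ]
        exact contractPM_adj_some_none.mpr (huniq u v huZ hvZ huv).1
      · rw [shoreMap_of_not_mem huZ, shoreMap_of_not_mem hvZ]
        exact contractPM_adj_some_some.mpr huv
    rw [Sym2.map_pair_eq]
    refine ⟨hM₁uv, M₁.adj_sub hM₁uv, shoreMap Z u, shoreMap Z v, rfl,
      Set.mem_image_of_mem _ huX, ?_⟩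
    rintro ⟨x, hxX, hxv⟩
    exact hsep hxX hvX hxv
  have hinjon : Set.InjOn (Sym2.map (shoreMap Z)) (M.edgeSet ∩ cutEdges G X) := by
    rintro e₁ ⟨he₁M, -, u₁, v₁, rfl, hu₁X, hv₁X⟩ e₂ ⟨he₂M, -, u₂, v₂, rfl, hu₂X, hv₂X⟩ heq
    have h₁ : M.Adj u₁ v₁ := he₁M
    have h₂ : M.Adj u₂ v₂ := he₂M
    rw [Sym2.map_pair_eq, Sym2.map_pair_eq] at heq
    rcases Sym2.eq_iff.mp heq with ⟨hA, hB⟩ | ⟨hA, hB⟩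
    swap
    · exact absurd hA (fun hA => hsep hu₁X hv₂X hA)
    rcases shoreMap_eq_cases hA with rfl | ⟨hu₁Z, hu₂Z⟩
    · rcases shoreMap_eq_cases hB with rfl | ⟨hv₁Z, hv₂Z⟩
      · rfl
      · have hdisj : Disjoint Z X := by
          rcases hX with hX | hX
          · exact absurd (hX hv₁Z) hv₁X
          · exact hX
        have hu₁Z : u₁ ∉ Z := fun hc => Set.disjoint_left.mp hdisj hc hu₁X
        obtain ⟨-, hz₁⟩ := huniq u₁ v₁ hu₁Z hv₁Z h₁
        obtain ⟨-, hz₂⟩ := huniq u₁ v₂ hu₁Z hv₂Z h₂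
        rw [hz₁, hz₂]
    · have hZX : Z ⊆ X := by
        rcases hX with hX | hX
        · exact hX
        · exact absurd hu₁X (Set.disjoint_left.mp hX hu₁Z)
      have hv₁Z : v₁ ∉ Z := fun hc => hv₁X (hZX hc)
      have hv₂Z : v₂ ∉ Z := fun hc => hv₂X (hZX hc)
      have hv₁v₂ : v₁ = v₂ := by
        rcases shoreMap_eq_cases hB with h | ⟨hc, -⟩
        · exact h
        · exact absurd hc hv₁Z
      obtain ⟨-, hz₁⟩ := huniq v₁ u₁ hv₁Z hu₁Z h₁.symm
      obtain ⟨-, hz₂⟩ := huniq v₂ u₂ hv₂Z hu₂Z h₂.symm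
      rw [hz₁, hz₂, hv₁v₂]
  calc (M.edgeSet ∩ cutEdges G X).ncard
      = (Sym2.map (shoreMap Z) '' (M.edgeSet ∩ cutEdges G X)).ncard :=
        (Set.ncard_image_of_injOn hinjon).symm
    _ ≤ (M₁.edgeSet ∩ cutEdges (contractShore G Z) (shoreMap Z '' X)).ncard := by
        apply Set.ncard_le_ncard _ (Set.toFinite _)
        rintro e' ⟨e, he, rfl⟩
        exact hmapsto e he
    _ ≤ matchingPorosity (contractShore G Z) (shoreMap Z '' X) := le_matchingPorosity hM₁pm

end ContractTransfer
section LeafFacts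

variable {A : Type*} {T : SimpleGraph A} {ℓ s : A}

lemma nbr_adj (hN : T.neighborSet ℓ = {s}) : T.Adj ℓ s := by
  have : s ∈ T.neighborSet ℓ := by rw [hN]; rfl
  exact this

lemma nbr_unique (hN : T.neighborSet ℓ = {s}) {y : A} (h : T.Adj ℓ y) : y = s := by
  have : y ∈ T.neighborSet ℓ := h
  rwa [hN] at this

lemma nbr_ne (hN : T.neighborSet ℓ = {s}) : ℓ ≠ s := (nbr_adj hN).ne

/-- In the tree minus its leaf edge, the leaf is isolated. -/
lemma leafdel_not_adj (hN : T.neighborSet ℓ = {s}) {x y : A}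
    (h : (T.deleteEdges {s(ℓ, s)}).Adj x y) : x ≠ ℓ ∧ y ≠ ℓ := by
  rw [SimpleGraph.deleteEdges_adj] at h
  constructor
  · rintro rfl
    exact h.2 (by rw [Set.mem_singleton_iff, nbr_unique hN h.1])
  · rintro rfl
    exact h.2 (by rw [Set.mem_singleton_iff, Sym2.eq_swap, nbr_unique hN h.1.symm])

/-- Every non-leaf vertex reaches `s` in the tree minus its leaf edge. -/
lemma leafdel_reach (hconn : T.Connected) (hN : T.neighborSet ℓ = {s}) {x : A}
    (hx : x ≠ ℓ) : (T.deleteEdges {s(ℓ, s)}).Reachable x s := by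
  have hclosed : ∀ z ∈ {y | y = ℓ ∨ (T.deleteEdges {s(ℓ, s)}).Reachable y s}, ∀ y,
      T.Adj z y → y ∈ {y | y = ℓ ∨ (T.deleteEdges {s(ℓ, s)}).Reachable y s} := by
    rintro z (rfl | hz) y hzy
    · exact Or.inr ((nbr_unique hN hzy) ▸ SimpleGraph.Reachable.refl _)
    · by_cases hy : y = ℓ
      · exact Or.inl hy
      · by_cases hys : y = s
        · exact Or.inr (hys ▸ SimpleGraph.Reachable.refl _)
        · refine Or.inr (SimpleGraph.Adj.reachable ?_ |>.trans hz)
          rw [SimpleGraph.deleteEdges_adj]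
          refine ⟨hzy.symm, ?_⟩
          rw [Set.mem_singleton_iff]
          intro hc
          rcases Sym2.eq_iff.mp hc with ⟨h1, -⟩ | ⟨h1, -⟩
          · exact hy h1
          · exact hys h1
  have := reachable_closed hclosed (Or.inr (SimpleGraph.Reachable.refl s))
    (hconn.preconnected s x)
  rcases this with rfl | h
  · exact absurd rfl hx
  · exact h

lemma leafdel_not_reach (hacyc : T.IsAcyclic) (hN : T.neighborSet ℓ = {s}) :
    ¬ (T.deleteEdges {s(ℓ, s)}).Reachable ℓ s := by
  have hbr := (SimpleGraph.isAcyclic_iff_forall_adj_isBridge.mp hacyc) (nbr_adj hN)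
  rw [isBridge_iff' (nbr_adj hN)] at hbr
  exact hbr.2

/-- The neighbour of a leaf in a cubic tree with at least 3 vertices has degree 3. -/
lemma nbr_deg_three [Finite A] (hT : IsCubicTree T) (hN : T.neighborSet ℓ = {s})
    (hcard : 3 ≤ Nat.card A) : ndeg T s = 3 := by
  rcases hT.2 s with h1 | h3
  · exfalso
    obtain ⟨t, ht⟩ := Set.ncard_eq_one.mp h1
    have htℓ : t = ℓ := by
      have : ℓ ∈ T.neighborSet s := (nbr_adj hN).symm
      rw [ht] at this
      rw [← this]
    rw [htℓ] at ht
    have hclosed : ∀ z ∈ ({ℓ, s} : Set A), ∀ y, T.Adj z y → y ∈ ({ℓ, s} : Set A) := by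
      rintro z (rfl | rfl) y hzy
      · exact Or.inr (nbr_unique hN hzy)
      · have : y ∈ T.neighborSet z := hzy
        rw [ht] at this
        exact Or.inl this
    have huniv : (Set.univ : Set A) ⊆ {ℓ, s} := by
      intro z _
      exact reachable_closed hclosed (Or.inl rfl) (hT.1.isConnected.preconnected ℓ z)
    have := Set.ncard_le_ncard huniv (Set.toFinite _)
    rw [Set.ncard_univ] at this
    have h2 : ({ℓ, s} : Set A).ncard = 2 := Set.ncard_pair (nbr_ne hN)
    omega
  · exact h3

end LeafFacts

section Glue

variable {A B : Type*}

/-- Glue two trees with distinguished leaf edges `ℓ₁s₁`, `ℓ₂s₂`: remove `ℓ₁`, `ℓ₂` and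
join `s₁` to `s₂`. -/
def glueG (T₁ : SimpleGraph A) (T₂ : SimpleGraph B) (ℓ₁ s₁ : A) (ℓ₂ s₂ : B) :
    SimpleGraph ({x : A // x ≠ ℓ₁} ⊕ {y : B // y ≠ ℓ₂}) where
  Adj u v := match u, v with
    | Sum.inl a, Sum.inl b => T₁.Adj a.1 b.1
    | Sum.inr a, Sum.inr b => T₂.Adj a.1 b.1
    | Sum.inl a, Sum.inr b => a.1 = s₁ ∧ b.1 = s₂
    | Sum.inr a, Sum.inl b => b.1 = s₁ ∧ a.1 = s₂
  symm := by
    refine ⟨?_⟩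
    rintro (a | a) (b | b) h
    · exact h.symm
    · exact h
    · exact h
    · exact h.symm
  loopless := by
    refine ⟨?_⟩
    rintro (a | a) h
    · exact T₁.loopless.irrefl _ h
    · exact T₂.loopless.irrefl _ h

variable {T₁ : SimpleGraph A} {T₂ : SimpleGraph B} {ℓ₁ s₁ : A} {ℓ₂ s₂ : B}

@[simp] lemma glueG_adj_inl_inl {a b : {x : A // x ≠ ℓ₁}} :
    (glueG T₁ T₂ ℓ₁ s₁ ℓ₂ s₂).Adj (Sum.inl a) (Sum.inl b) ↔ T₁.Adj a.1 b.1 := Iff.rfl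

@[simp] lemma glueG_adj_inr_inr {a b : {y : B // y ≠ ℓ₂}} :
    (glueG T₁ T₂ ℓ₁ s₁ ℓ₂ s₂).Adj (Sum.inr a) (Sum.inr b) ↔ T₂.Adj a.1 b.1 := Iff.rfl

@[simp] lemma glueG_adj_inl_inr {a : {x : A // x ≠ ℓ₁}} {b : {y : B // y ≠ ℓ₂}} :
    (glueG T₁ T₂ ℓ₁ s₁ ℓ₂ s₂).Adj (Sum.inl a) (Sum.inr b) ↔ a.1 = s₁ ∧ b.1 = s₂ := Iff.rfl

@[simp] lemma glueG_adj_inr_inl {a : {x : A // x ≠ ℓ₁}} {b : {y : B // y ≠ ℓ₂}} :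
    (glueG T₁ T₂ ℓ₁ s₁ ℓ₂ s₂).Adj (Sum.inr b) (Sum.inl a) ↔ a.1 = s₁ ∧ b.1 = s₂ := Iff.rfl

lemma glueG_swap_adj {u v : {x : A // x ≠ ℓ₁} ⊕ {y : B // y ≠ ℓ₂}}
    (h : (glueG T₁ T₂ ℓ₁ s₁ ℓ₂ s₂).Adj u v) :
    (glueG T₂ T₁ ℓ₂ s₂ ℓ₁ s₁).Adj u.swap v.swap := by
  rcases u with a | a <;> rcases v with b | b
  · exact h
  · exact ⟨h.2, h.1⟩
  · exact ⟨h.2, h.1⟩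
  · exact h

/-- Reachability transfers across the left-right swap of a glued tree. -/
lemma glueG_swap_reach {u v x y : {x : A // x ≠ ℓ₁} ⊕ {y : B // y ≠ ℓ₂}}
    (h : ((glueG T₁ T₂ ℓ₁ s₁ ℓ₂ s₂).deleteEdges {s(x, y)}).Reachable u v) :
    ((glueG T₂ T₁ ℓ₂ s₂ ℓ₁ s₁).deleteEdges {s(x.swap, y.swap)}).Reachable u.swap v.swap := by
  apply reachable_map' Sum.swap _ h
  intro p q hpq
  rw [SimpleGraph.deleteEdges_adj] at hpq ⊢
  left
  refine ⟨glueG_swap_adj hpq.1, fun hc => hpq.2 ?_⟩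
  rw [Set.mem_singleton_iff] at hc ⊢
  have := congrArg (Sym2.map Sum.swap) hc
  simpa using this

end Glue
section GlueFacts

variable {A B : Type*} {T₁ : SimpleGraph A} {T₂ : SimpleGraph B} {ℓ₁ s₁ : A} {ℓ₂ s₂ : B}

lemma ncard_subtype_val_image [Finite A] {ℓ : A} (S : Set {y : A // y ≠ ℓ}) :
    (Subtype.val '' S).ncard = S.ncard :=
  Set.ncard_image_of_injective _ Subtype.val_injective

lemma ncard_subtype_preimage [Finite A] {ℓ : A} {S : Set A} (hS : ℓ ∉ S) :
    {x : {y : A // y ≠ ℓ} | x.1 ∈ S}.ncard = S.ncard := by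
  have himg : Subtype.val '' {x : {y : A // y ≠ ℓ} | x.1 ∈ S} = S := by
    ext a
    constructor
    · rintro ⟨x, hx, rfl⟩; exact hx
    · intro ha
      exact ⟨⟨a, fun h => hS (h ▸ ha)⟩, ha, rfl⟩
  conv_rhs => rw [← himg]
  exact (Set.ncard_image_of_injective _ Subtype.val_injective).symm

lemma ncard_subtype_preimage_mem [Finite A] {ℓ : A} {S : Set A} (hS : ℓ ∈ S) :
    {x : {y : A // y ≠ ℓ} | x.1 ∈ S}.ncard = S.ncard - 1 := by
  have himg : Subtype.val '' {x : {y : A // y ≠ ℓ} | x.1 ∈ S} = S \ {ℓ} := by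
    ext a
    constructor
    · rintro ⟨x, hx, rfl⟩; exact ⟨hx, x.2⟩
    · rintro ⟨ha, hne⟩
      exact ⟨⟨a, hne⟩, ha, rfl⟩
  rw [← Set.ncard_diff_singleton_of_mem hS]
  conv_rhs => rw [← himg]
  exact (Set.ncard_image_of_injective _ Subtype.val_injective).symm

lemma glueG_nbr_inl (a : {x : A // x ≠ ℓ₁}) (ha : a.1 ≠ s₁) :
    (glueG T₁ T₂ ℓ₁ s₁ ℓ₂ s₂).neighborSet (Sum.inl a) =
      Sum.inl '' {x : {x : A // x ≠ ℓ₁} | x.1 ∈ T₁.neighborSet a.1} := by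
  ext w
  rcases w with b | b
  · simp only [SimpleGraph.mem_neighborSet, glueG_adj_inl_inl, Set.mem_image]
    constructor
    · intro h; exact ⟨b, h, rfl⟩
    · rintro ⟨x, hx, hxb⟩
      cases Sum.inl_injective hxb
      exact hx
  · simp only [SimpleGraph.mem_neighborSet, glueG_adj_inl_inr, Set.mem_image]
    constructor
    · rintro ⟨h, -⟩; exact absurd h ha
    · rintro ⟨x, -, hxb⟩; exact absurd hxb (by simp)

lemma glueG_nbr_inl_s (hs : s₁ ≠ ℓ₁) (hs₂ : s₂ ≠ ℓ₂) :
    (glueG T₁ T₂ ℓ₁ s₁ ℓ₂ s₂).neighborSet (Sum.inl ⟨s₁, hs⟩) =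
      Sum.inl '' {x : {x : A // x ≠ ℓ₁} | x.1 ∈ T₁.neighborSet s₁} ∪
        {Sum.inr ⟨s₂, hs₂⟩} := by
  ext w
  rcases w with b | b
  · simp only [SimpleGraph.mem_neighborSet, glueG_adj_inl_inl, Set.mem_union, Set.mem_image,
      Set.mem_singleton_iff]
    constructor
    · intro h; exact Or.inl ⟨b, h, rfl⟩
    · rintro (⟨x, hx, hxb⟩ | hc)
      · cases Sum.inl_injective hxb
        exact hx
      · exact absurd hc (by simp)
  · simp only [SimpleGraph.mem_neighborSet, glueG_adj_inl_inr, Set.mem_union, Set.mem_image,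
      Set.mem_singleton_iff]
    constructor
    · rintro ⟨-, h⟩
      exact Or.inr (by rw [Sum.inr.injEq]; exact Subtype.ext h)
    · rintro (⟨x, -, hxb⟩ | hc)
      · exact absurd hxb (by simp)
      · cases Sum.inr_injective hc
        exact ⟨trivial, rfl⟩


variable [Finite A] [Finite B]

lemma glueG_ndeg_inl (hN₁ : T₁.neighborSet ℓ₁ = {s₁}) (a : {x : A // x ≠ ℓ₁})
    (ha : a.1 ≠ s₁) :
    ndeg (glueG T₁ T₂ ℓ₁ s₁ ℓ₂ s₂) (Sum.inl a) = ndeg T₁ a.1 := by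
  have hℓnot : ℓ₁ ∉ T₁.neighborSet a.1 := by
    intro hc
    have : a.1 ∈ T₁.neighborSet ℓ₁ := (SimpleGraph.mem_neighborSet _ _ _).mpr
      ((SimpleGraph.mem_neighborSet _ _ _).mp hc).symm
    rw [hN₁] at this
    exact ha this
  unfold ndeg
  rw [glueG_nbr_inl a ha, Set.ncard_image_of_injective _ Sum.inl_injective,
    ncard_subtype_preimage hℓnot]

lemma glueG_ndeg_inl_s (hN₁ : T₁.neighborSet ℓ₁ = {s₁}) (hs₂ : s₂ ≠ ℓ₂) :
    ndeg (glueG T₁ T₂ ℓ₁ s₁ ℓ₂ s₂) (Sum.inl ⟨s₁, (nbr_ne hN₁).symm⟩) = ndeg T₁ s₁ := by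
  have hℓmem : ℓ₁ ∈ T₁.neighborSet s₁ := (nbr_adj hN₁).symm
  have hpos : 1 ≤ (T₁.neighborSet s₁).ncard := by
    rw [Nat.one_le_iff_ne_zero]
    intro hc
    rw [Set.ncard_eq_zero (Set.toFinite _)] at hc
    rw [hc] at hℓmem
    exact hℓmem
  unfold ndeg
  rw [glueG_nbr_inl_s (nbr_ne hN₁).symm hs₂,
    Set.ncard_union_eq (Set.disjoint_left.mpr (by rintro x ⟨w, -, rfl⟩; simp)),
    Set.ncard_image_of_injective _ Sum.inl_injective, ncard_subtype_preimage_mem hℓmem,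
    Set.ncard_singleton]
  omega

lemma glueG_ndeg_swap (w : {x : A // x ≠ ℓ₁} ⊕ {y : B // y ≠ ℓ₂}) :
    ndeg (glueG T₂ T₁ ℓ₂ s₂ ℓ₁ s₁) w.swap = ndeg (glueG T₁ T₂ ℓ₁ s₁ ℓ₂ s₂) w := by
  unfold ndeg
  have himg : (glueG T₂ T₁ ℓ₂ s₂ ℓ₁ s₁).neighborSet w.swap =
      Sum.swap '' (glueG T₁ T₂ ℓ₁ s₁ ℓ₂ s₂).neighborSet w := by
    ext u
    simp only [SimpleGraph.mem_neighborSet, Set.mem_image]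
    constructor
    · intro h
      refine ⟨u.swap, ?_, Sum.swap_swap u⟩
      have := glueG_swap_adj h
      simpa using this
    · rintro ⟨p, hp, rfl⟩
      exact glueG_swap_adj hp
  have hswapinj : Function.Injective (Sum.swap : {x : A // x ≠ ℓ₁} ⊕ {y : B // y ≠ ℓ₂} → _) :=
    fun x y h => by rw [← Sum.swap_swap x, h, Sum.swap_swap]
  rw [himg, Set.ncard_image_of_injective _ hswapinj]

/-- projection of the glued tree onto the left tree -/
lemma glueG_proj_reach (hN₁ : T₁.neighborSet ℓ₁ = {s₁}) {a b : {x : A // x ≠ ℓ₁}}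
    {u v : {x : A // x ≠ ℓ₁} ⊕ {y : B // y ≠ ℓ₂}}
    (h : ((glueG T₁ T₂ ℓ₁ s₁ ℓ₂ s₂).deleteEdges {s(Sum.inl a, Sum.inl b)}).Reachable u v) :
    (T₁.deleteEdges {s(a.1, b.1)}).Reachable
      (Sum.elim Subtype.val (fun _ => ℓ₁) u) (Sum.elim Subtype.val (fun _ => ℓ₁) v) := by
  apply reachable_map' (Sum.elim Subtype.val (fun _ => ℓ₁)) _ h
  rintro (x | x) (y | y) hxy <;> rw [SimpleGraph.deleteEdges_adj] at hxy
  · left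
    rw [SimpleGraph.deleteEdges_adj]
    refine ⟨hxy.1, fun hc => hxy.2 ?_⟩
    rw [Set.mem_singleton_iff] at hc ⊢
    rcases Sym2.eq_iff.mp hc with ⟨h1, h2⟩ | ⟨h1, h2⟩
    · rw [Sym2.eq_iff]
      exact Or.inl ⟨by rw [Subtype.ext h1], by rw [Subtype.ext h2]⟩
    · rw [Sym2.eq_iff]
      exact Or.inr ⟨by rw [Subtype.ext h1], by rw [Subtype.ext h2]⟩
  · left
    obtain ⟨h1, -⟩ := (glueG_adj_inl_inr).mp hxy.1
    simp only [Sum.elim_inl, Sum.elim_inr]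
    rw [SimpleGraph.deleteEdges_adj, h1]
    refine ⟨(nbr_adj hN₁).symm, ?_⟩
    rw [Set.mem_singleton_iff]
    intro hc
    rcases Sym2.eq_iff.mp hc with ⟨-, h2⟩ | ⟨-, h2⟩
    · exact b.2 h2.symm
    · exact a.2 h2.symm
  · left
    obtain ⟨h1, -⟩ := (glueG_adj_inr_inl).mp hxy.1
    simp only [Sum.elim_inl, Sum.elim_inr]
    rw [SimpleGraph.deleteEdges_adj, h1]
    refine ⟨nbr_adj hN₁, ?_⟩
    rw [Set.mem_singleton_iff]
    intro hc
    rcases Sym2.eq_iff.mp hc with ⟨h2, -⟩ | ⟨h2, -⟩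
    · exact a.2 h2.symm
    · exact b.2 h2.symm
  · right; rfl

/-- projection for the bridge edge -/
lemma glueG_proj_reach_bridge (hN₁ : T₁.neighborSet ℓ₁ = {s₁}) (hs₂ : s₂ ≠ ℓ₂)
    {u v : {x : A // x ≠ ℓ₁} ⊕ {y : B // y ≠ ℓ₂}}
    (h : ((glueG T₁ T₂ ℓ₁ s₁ ℓ₂ s₂).deleteEdges
      {s(Sum.inl ⟨s₁, (nbr_ne hN₁).symm⟩, Sum.inr ⟨s₂, hs₂⟩)}).Reachable u v) :
    (T₁.deleteEdges {s(s₁, ℓ₁)}).Reachable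
      (Sum.elim Subtype.val (fun _ => ℓ₁) u) (Sum.elim Subtype.val (fun _ => ℓ₁) v) := by
  apply reachable_map' (Sum.elim Subtype.val (fun _ => ℓ₁)) _ h
  rintro (x | x) (y | y) hxy <;> rw [SimpleGraph.deleteEdges_adj] at hxy
  · left
    rw [SimpleGraph.deleteEdges_adj]
    refine ⟨hxy.1, ?_⟩
    rw [Set.mem_singleton_iff, Sum.elim_inl, Sum.elim_inl]
    intro hc
    rcases Sym2.eq_iff.mp hc with ⟨-, h2⟩ | ⟨h2, -⟩
    · exact y.2 h2
    · exact x.2 h2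
  · exfalso
    obtain ⟨h1, h2⟩ := (glueG_adj_inl_inr).mp hxy.1
    apply hxy.2
    rw [Set.mem_singleton_iff, Sym2.eq_iff]
    exact Or.inl ⟨by rw [Sum.inl.injEq]; exact Subtype.ext h1,
      by rw [Sum.inr.injEq]; exact Subtype.ext h2⟩
  · exfalso
    obtain ⟨h1, h2⟩ := (glueG_adj_inr_inl).mp hxy.1
    apply hxy.2
    rw [Set.mem_singleton_iff, Sym2.eq_iff]
    exact Or.inr ⟨by rw [Sum.inr.injEq]; exact Subtype.ext h2,
      by rw [Sum.inl.injEq]; exact Subtype.ext h1⟩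
  · right; rfl

end GlueFacts
section GlueTree

variable {A B : Type*} {T₁ : SimpleGraph A} {T₂ : SimpleGraph B} {ℓ₁ s₁ : A} {ℓ₂ s₂ : B}

open Classical in
/-- Lift reachability in `T₁` minus an inner edge into the glued tree. -/
lemma glueG_reach_of_left (hN₁ : T₁.neighborSet ℓ₁ = {s₁}) (hs₂ : s₂ ≠ ℓ₂)
    {a b : {x : A // x ≠ ℓ₁}} {x y : A}
    (hr : (T₁.deleteEdges {s(a.1, b.1)}).Reachable x y) :
    ((glueG T₁ T₂ ℓ₁ s₁ ℓ₂ s₂).deleteEdges {s(Sum.inl a, Sum.inl b)}).Reachable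
      (if hx : x = ℓ₁ then Sum.inr ⟨s₂, hs₂⟩ else Sum.inl ⟨x, hx⟩)
      (if hy : y = ℓ₁ then Sum.inr ⟨s₂, hs₂⟩ else Sum.inl ⟨y, hy⟩) := by
  have hhom : ∀ p q : A, (T₁.deleteEdges {s(a.1, b.1)}).Adj p q →
      ((glueG T₁ T₂ ℓ₁ s₁ ℓ₂ s₂).deleteEdges {s(Sum.inl a, Sum.inl b)}).Adj
        (if h : p = ℓ₁ then Sum.inr ⟨s₂, hs₂⟩ else Sum.inl ⟨p, h⟩)
        (if h : q = ℓ₁ then Sum.inr ⟨s₂, hs₂⟩ else Sum.inl ⟨q, h⟩) ∨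
      (if h : p = ℓ₁ then (Sum.inr ⟨s₂, hs₂⟩ : {x : A // x ≠ ℓ₁} ⊕ {y : B // y ≠ ℓ₂})
        else Sum.inl ⟨p, h⟩) =
        (if h : q = ℓ₁ then Sum.inr ⟨s₂, hs₂⟩ else Sum.inl ⟨q, h⟩) := by
    intro p q hpq
    rw [SimpleGraph.deleteEdges_adj] at hpq
    left
    rw [SimpleGraph.deleteEdges_adj]
    by_cases hp : p = ℓ₁ <;> by_cases hq : q = ℓ₁
    · exfalso
      rw [hp, hq] at hpq
      exact T₁.loopless.irrefl _ hpq.1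
    · have hq1 : q = s₁ := nbr_unique hN₁ (hp ▸ hpq.1)
      simp only [dif_pos hp, dif_neg hq]
      constructor
      · exact ⟨hq1, rfl⟩
      · rw [Set.mem_singleton_iff]
        intro hc
        rcases Sym2.eq_iff.mp hc with ⟨h1, -⟩ | ⟨h1, -⟩ <;> exact absurd h1 (by simp)
    · have hp1 : p = s₁ := nbr_unique hN₁ (hq ▸ hpq.1).symm
      simp only [dif_pos hq, dif_neg hp]
      constructor
      · exact ⟨hp1, rfl⟩
      · rw [Set.mem_singleton_iff]
        intro hc
        rcases Sym2.eq_iff.mp hc with ⟨-, h1⟩ | ⟨-, h1⟩ <;> exact absurd h1 (by simp)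
    · simp only [dif_neg hp, dif_neg hq]
      constructor
      · exact hpq.1
      · rw [Set.mem_singleton_iff]
        intro hc
        apply hpq.2
        rw [Set.mem_singleton_iff]
        have := congrArg (Sym2.map (Sum.elim Subtype.val (fun _ => ℓ₁))) hc
        simpa using this
  exact reachable_map' _ hhom hr

/-- Lift reachability in `T₁` minus the leaf edge into the glued tree minus a set of
edges containing no `inl`-`inl` edge. -/
lemma glueG_reach_left_leafdel (hN₁ : T₁.neighborSet ℓ₁ = {s₁}) {x y : A}
    (hx : x ≠ ℓ₁) (hy : y ≠ ℓ₁)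
    (hr : (T₁.deleteEdges {s(ℓ₁, s₁)}).Reachable x y)
    (E : Set (Sym2 ({x : A // x ≠ ℓ₁} ⊕ {y : B // y ≠ ℓ₂})))
    (hE : ∀ u v : {x : A // x ≠ ℓ₁}, s(Sum.inl u, Sum.inl v) ∉ E) :
    ((glueG T₁ T₂ ℓ₁ s₁ ℓ₂ s₂).deleteEdges E).Reachable
      (Sum.inl ⟨x, hx⟩) (Sum.inl ⟨y, hy⟩) := by
  classical
  have hhom : ∀ p q : A, (T₁.deleteEdges {s(ℓ₁, s₁)}).Adj p q →
      ((glueG T₁ T₂ ℓ₁ s₁ ℓ₂ s₂).deleteEdges E).Adj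
        (if h : p = ℓ₁ then Sum.inl ⟨x, hx⟩ else Sum.inl ⟨p, h⟩)
        (if h : q = ℓ₁ then Sum.inl ⟨x, hx⟩ else Sum.inl ⟨q, h⟩) ∨
      (if h : p = ℓ₁ then (Sum.inl ⟨x, hx⟩ : {x : A // x ≠ ℓ₁} ⊕ {y : B // y ≠ ℓ₂})
        else Sum.inl ⟨p, h⟩) =
        (if h : q = ℓ₁ then Sum.inl ⟨x, hx⟩ else Sum.inl ⟨q, h⟩) := by
    intro p q hpq
    obtain ⟨hp, hq⟩ := leafdel_not_adj hN₁ hpq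
    left
    rw [SimpleGraph.deleteEdges_adj]
    simp only [dif_neg hp, dif_neg hq]
    exact ⟨(SimpleGraph.deleteEdges_adj.mp hpq).1, hE _ _⟩
  have key := reachable_map' _ hhom hr
  simpa only [dif_neg hx, dif_neg hy] using key

/-- Every right-side vertex reaches `s₂` in the glued tree minus a set of edges
containing no `inr`-`inr` edge. -/
lemma glueG_reach_right (hN₂ : T₂.neighborSet ℓ₂ = {s₂}) (hconn₂ : T₂.Connected)
    {y : B} (hy : y ≠ ℓ₂)
    (E : Set (Sym2 ({x : A // x ≠ ℓ₁} ⊕ {y : B // y ≠ ℓ₂})))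
    (hE : ∀ u v : {y : B // y ≠ ℓ₂}, s(Sum.inr u, Sum.inr v) ∉ E) :
    ((glueG T₁ T₂ ℓ₁ s₁ ℓ₂ s₂).deleteEdges E).Reachable
      (Sum.inr ⟨y, hy⟩) (Sum.inr ⟨s₂, (nbr_ne hN₂).symm⟩) := by
  classical
  have hr := leafdel_reach hconn₂ hN₂ hy
  have hhom : ∀ p q : B, (T₂.deleteEdges {s(ℓ₂, s₂)}).Adj p q →
      ((glueG T₁ T₂ ℓ₁ s₁ ℓ₂ s₂).deleteEdges E).Adj
        (if h : p = ℓ₂ then Sum.inr ⟨y, hy⟩ else Sum.inr ⟨p, h⟩)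
        (if h : q = ℓ₂ then Sum.inr ⟨y, hy⟩ else Sum.inr ⟨q, h⟩) ∨
      (if h : p = ℓ₂ then (Sum.inr ⟨y, hy⟩ : {x : A // x ≠ ℓ₁} ⊕ {y : B // y ≠ ℓ₂})
        else Sum.inr ⟨p, h⟩) =
        (if h : q = ℓ₂ then Sum.inr ⟨y, hy⟩ else Sum.inr ⟨q, h⟩) := by
    intro p q hpq
    obtain ⟨hp, hq⟩ := leafdel_not_adj hN₂ hpq
    left
    rw [SimpleGraph.deleteEdges_adj]
    simp only [dif_neg hp, dif_neg hq]
    exact ⟨(SimpleGraph.deleteEdges_adj.mp hpq).1, hE _ _⟩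
  have key := reachable_map' _ hhom hr
  simpa only [dif_neg hy, dif_neg (nbr_ne hN₂).symm] using key

/-- The right side cannot reach the left side once the bridge is removed. -/
lemma glueG_bridge_sep {a : {x : A // x ≠ ℓ₁}} {b : {y : B // y ≠ ℓ₂}}
    (ha : a.1 = s₁) (hb : b.1 = s₂) (c : {y : B // y ≠ ℓ₂}) (d : {x : A // x ≠ ℓ₁}) :
    ¬ ((glueG T₁ T₂ ℓ₁ s₁ ℓ₂ s₂).deleteEdges {s(Sum.inl a, Sum.inr b)}).Reachable
      (Sum.inr c) (Sum.inl d) := by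
  intro hr
  have hclosed : ∀ w ∈ {w : {x : A // x ≠ ℓ₁} ⊕ {y : B // y ≠ ℓ₂} | ∃ t, w = Sum.inr t},
      ∀ u, ((glueG T₁ T₂ ℓ₁ s₁ ℓ₂ s₂).deleteEdges {s(Sum.inl a, Sum.inr b)}).Adj w u →
        u ∈ {w | ∃ t, w = Sum.inr t} := by
    rintro w ⟨t, rfl⟩ u hadj
    rw [SimpleGraph.deleteEdges_adj] at hadj
    rcases u with d' | t'
    · exfalso
      obtain ⟨hd', ht⟩ := glueG_adj_inr_inl.mp hadj.1
      apply hadj.2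
      rw [Set.mem_singleton_iff]
      have hda : d' = a := Subtype.ext (hd'.trans ha.symm)
      have htb : t = b := Subtype.ext (ht.trans hb.symm)
      rw [hda, htb, Sym2.eq_swap]
    · exact ⟨t', rfl⟩
  obtain ⟨t, ht⟩ := reachable_closed hclosed ⟨c, rfl⟩ hr
  exact absurd ht (by simp)

variable [Finite A] [Finite B]

lemma glueG_connected (hN₁ : T₁.neighborSet ℓ₁ = {s₁}) (hN₂ : T₂.neighborSet ℓ₂ = {s₂})
    (hc₁ : T₁.Connected) (hc₂ : T₂.Connected) :
    (glueG T₁ T₂ ℓ₁ s₁ ℓ₂ s₂).Connected := by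
  have hreach : ∀ w, (glueG T₁ T₂ ℓ₁ s₁ ℓ₂ s₂).Reachable w
      (Sum.inl ⟨s₁, (nbr_ne hN₁).symm⟩) := by
    rintro (a | b)
    · have hr := leafdel_reach hc₁ hN₁ a.2
      have key := glueG_reach_left_leafdel (T₂ := T₂) (ℓ₂ := ℓ₂) (s₂ := s₂) hN₁ a.2
        (nbr_ne hN₁).symm hr ∅ (by simp)
      have := key.mono (SimpleGraph.deleteEdges_le _)
      simpa using this
    · have key := glueG_reach_right (T₁ := T₁) (ℓ₁ := ℓ₁) (s₁ := s₁) hN₂ hc₂ b.2 ∅ (by simp)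
      have h1 : (glueG T₁ T₂ ℓ₁ s₁ ℓ₂ s₂).Reachable (Sum.inr b)
          (Sum.inr ⟨s₂, (nbr_ne hN₂).symm⟩) := by
        have := key.mono (SimpleGraph.deleteEdges_le _)
        simpa using this
      exact h1.trans (show (glueG T₁ T₂ ℓ₁ s₁ ℓ₂ s₂).Adj (Sum.inr ⟨s₂, (nbr_ne hN₂).symm⟩)
        (Sum.inl ⟨s₁, (nbr_ne hN₁).symm⟩) from ⟨rfl, rfl⟩).reachable
  haveI : Nonempty ({x : A // x ≠ ℓ₁} ⊕ {y : B // y ≠ ℓ₂}) :=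
    ⟨Sum.inl ⟨s₁, (nbr_ne hN₁).symm⟩⟩
  exact SimpleGraph.Connected.mk fun u v => (hreach u).trans (hreach v).symm

lemma glueG_acyclic (hT₁ : T₁.IsTree) (hT₂ : T₂.IsTree)
    (hN₁ : T₁.neighborSet ℓ₁ = {s₁}) (hN₂ : T₂.neighborSet ℓ₂ = {s₂}) :
    (glueG T₁ T₂ ℓ₁ s₁ ℓ₂ s₂).IsAcyclic := by
  rw [SimpleGraph.isAcyclic_iff_forall_adj_isBridge]
  rintro (a | a) (b | b) hadj <;> rw [isBridge_iff' hadj] <;> refine ⟨hadj, fun hr => ?_⟩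
  · have h1 := glueG_proj_reach hN₁ hr
    simp only [Sum.elim_inl] at h1
    have hbr := (SimpleGraph.isAcyclic_iff_forall_adj_isBridge.mp hT₁.IsAcyclic)
      (glueG_adj_inl_inl.mp hadj)
    rw [isBridge_iff' (glueG_adj_inl_inl.mp hadj)] at hbr
    exact hbr.2 h1
  · obtain ⟨ha, hb⟩ := glueG_adj_inl_inr.mp hadj
    exact glueG_bridge_sep ha hb b a hr.symm
  · obtain ⟨hb, ha⟩ := glueG_adj_inr_inl.mp hadj
    have : ({s(Sum.inr a, Sum.inl b)} : Set (Sym2 _)) = {s(Sum.inl b, Sum.inr a)} := by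
      rw [Sym2.eq_swap]
    rw [this] at hr
    exact glueG_bridge_sep hb ha a b hr
  · have h2 := glueG_swap_reach hr
    simp only [Sum.swap_inr] at h2
    have h1 := glueG_proj_reach hN₂ h2
    simp only [Sum.elim_inl] at h1
    have hbr := (SimpleGraph.isAcyclic_iff_forall_adj_isBridge.mp hT₂.IsAcyclic)
      (glueG_adj_inr_inr.mp hadj)
    rw [isBridge_iff' (glueG_adj_inr_inr.mp hadj)] at hbr
    exact hbr.2 h1

end GlueTree
section KeyLemma

lemma cutEdges_compl {V : Type*} (G : SimpleGraph V) (Z : Set V) :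
    cutEdges G Zᶜ = cutEdges G Z := by
  ext e
  constructor
  · rintro ⟨hGe, u, v, rfl, hu, hv⟩
    exact ⟨hGe, v, u, Sym2.eq_swap, Set.notMem_compl_iff.mp hv,
      fun hc => (Set.mem_compl_iff _ _).mp hu hc⟩
  · rintro ⟨hGe, u, v, rfl, hu, hv⟩
    exact ⟨hGe, v, u, Sym2.eq_swap, (Set.mem_compl_iff _ _).mpr hv,
      Set.notMem_compl_iff.mpr hu⟩

lemma isTightCut_compl {V : Type*} {G : SimpleGraph V} {Z : Set V}
    (h : IsTightCut G Z) : IsTightCut G Zᶜ := by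
  intro M hM
  rw [cutEdges_compl]
  exact h M hM

variable {V : Type} [Finite V]

lemma decompWidth_bound {V' : Type} [Finite V'] {G' : SimpleGraph V'} {n : ℕ}
    {T : SimpleGraph (Fin n)} {δ : V' → Fin n} {a b : Fin n} (hadj : T.Adj a b) :
    matchingPorosity G' (treeShore T δ a b) ≤ decompWidth G' T δ := by
  have hb : BddAbove {k | ∃ t₁ t₂, T.Adj t₁ t₂ ∧
      k = matchingPorosity G' (treeShore T δ t₁ t₂)} := by
    refine ⟨Nat.card (Sym2 V'), ?_⟩
    rintro x ⟨t₁, t₂, h, rfl⟩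
    exact matchingPorosity_le_card _
  exact nat_le_sSup hb ⟨a, b, hadj, rfl⟩

lemma glue_decomp (G : SimpleGraph V) (Z : Set V)
    (hZt : IsTightCut G Z) (hZ2 : 2 ≤ Z.ncard) (hZc2 : 2 ≤ Zᶜ.ncard)
    {n₁ : ℕ} {T₁ : SimpleGraph (Fin n₁)} {δ₁ : Option {v : V // v ∉ Z} → Fin n₁}
    (h₁ : IsPMDecomp (contractShore G Z) T₁ δ₁)
    {n₂ : ℕ} {T₂ : SimpleGraph (Fin n₂)} {δ₂ : Option {v : V // v ∉ Zᶜ} → Fin n₂}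
    (h₂ : IsPMDecomp (contractShore G Zᶜ) T₂ δ₂) :
    pmw G ≤ max (decompWidth (contractShore G Z) T₁ δ₁)
      (decompWidth (contractShore G Zᶜ) T₂ δ₂) := by
  classical
  obtain ⟨⟨hT₁tree, hT₁deg⟩, hδ₁inj, hδ₁leaf, hδ₁surj⟩ := h₁
  obtain ⟨⟨hT₂tree, hT₂deg⟩, hδ₂inj, hδ₂leaf, hδ₂surj⟩ := h₂
  have hZne : Z.Nonempty := by
    rw [← Set.ncard_pos (Set.toFinite _)]; omega
  have hZcne : Zᶜ.Nonempty := by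
    rw [← Set.ncard_pos (Set.toFinite _)]; omega
  -- leaf edges
  obtain ⟨s₁, hN₁⟩ : ∃ s₁, T₁.neighborSet (δ₁ none) = {s₁} := by
    apply Set.ncard_eq_one.mp
    have := hδ₁leaf none
    unfold ndeg at this
    exact this
  obtain ⟨s₂, hN₂⟩ : ∃ s₂, T₂.neighborSet (δ₂ none) = {s₂} := by
    apply Set.ncard_eq_one.mp
    have := hδ₂leaf none
    unfold ndeg at this
    exact this
  set ℓ₁ := δ₁ none with hℓ₁
  set ℓ₂ := δ₂ none with hℓ₂
  have hs₁ : s₁ ≠ ℓ₁ := (nbr_ne hN₁).symm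
  have hs₂ : s₂ ≠ ℓ₂ := (nbr_ne hN₂).symm
  -- cardinalities
  have hcard₁ : 3 ≤ Nat.card (Fin n₁) := by
    have hinj := Nat.card_le_card_of_injective δ₁ hδ₁inj
    have hopt : Nat.card (Option {v : V // v ∉ Z}) = Zᶜ.ncard + 1 := by
      haveI := Fintype.ofFinite {v : V // v ∉ Z}
      rw [Nat.card_eq_fintype_card, Fintype.card_option]
      have hval : Nat.card {v : V // v ∉ Z} = Zᶜ.ncard := Nat.card_coe_set_eq Zᶜ
      rw [← hval, Nat.card_eq_fintype_card]
    omega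
  have hcard₂ : 3 ≤ Nat.card (Fin n₂) := by
    have hinj := Nat.card_le_card_of_injective δ₂ hδ₂inj
    have hopt : Nat.card (Option {v : V // v ∉ Zᶜ}) = Z.ncard + 1 := by
      haveI := Fintype.ofFinite {v : V // v ∉ Zᶜ}
      rw [Nat.card_eq_fintype_card, Fintype.card_option]
      have hval : Nat.card {v : V // v ∉ Zᶜ} = Z.ncard := by
        rw [Nat.card_congr (Equiv.subtypeEquivRight
          (fun v => (Set.notMem_compl_iff (s := Z))))]
        exact Nat.card_coe_set_eq Z
      rw [← hval, Nat.card_eq_fintype_card]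
    omega
  have hdeg_s₁ : ndeg T₁ s₁ = 3 := nbr_deg_three ⟨hT₁tree, hT₁deg⟩ hN₁ hcard₁
  have hdeg_s₂ : ndeg T₂ s₂ = 3 := nbr_deg_three ⟨hT₂tree, hT₂deg⟩ hN₂ hcard₂
  -- the leaves avoid ℓ and s
  have hδ₁ne : ∀ u : {v : V // v ∉ Z}, δ₁ (some u) ≠ ℓ₁ := by
    intro u hc
    have := hδ₁inj hc
    simp at this
  have hδ₂ne : ∀ u : {v : V // v ∉ Zᶜ}, δ₂ (some u) ≠ ℓ₂ := by
    intro u hc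
    have := hδ₂inj hc
    simp at this
  have hδ₁nes : ∀ x, δ₁ x ≠ s₁ := by
    intro x hc
    have := hδ₁leaf x
    rw [hc, hdeg_s₁] at this
    omega
  have hδ₂nes : ∀ x, δ₂ x ≠ s₂ := by
    intro x hc
    have := hδ₂leaf x
    rw [hc, hdeg_s₂] at this
    omega
  -- the glued tree and leaf map
  set Tg := glueG T₁ T₂ ℓ₁ s₁ ℓ₂ s₂ with hTgdef
  set Tg' := glueG T₂ T₁ ℓ₂ s₂ ℓ₁ s₁ with hTg'def
  have hvZc : ∀ {v : V}, v ∈ Z → v ∉ Zᶜ := fun h hc => hc h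
  set δg : V → ({x : Fin n₁ // x ≠ ℓ₁} ⊕ {y : Fin n₂ // y ≠ ℓ₂}) := fun v =>
    if h : v ∈ Z then Sum.inr ⟨δ₂ (some ⟨v, hvZc h⟩), hδ₂ne _⟩
    else Sum.inl ⟨δ₁ (some ⟨v, h⟩), hδ₁ne _⟩ with hδgdef
  have hδg_mem : ∀ {v : V} (h : v ∈ Z), δg v = Sum.inr ⟨δ₂ (some ⟨v, hvZc h⟩), hδ₂ne _⟩ :=
    fun {v} h => dif_pos h
  have hδg_not : ∀ {v : V} (h : v ∉ Z), δg v = Sum.inl ⟨δ₁ (some ⟨v, h⟩), hδ₁ne _⟩ :=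
    fun {v} h => dif_neg h
  have hndeg_inr : ∀ b : {y : Fin n₂ // y ≠ ℓ₂}, ndeg Tg (Sum.inr b) = ndeg Tg' (Sum.inl b) := by
    intro b
    have := glueG_ndeg_swap (T₁ := T₁) (T₂ := T₂) (ℓ₁ := ℓ₁) (s₁ := s₁) (ℓ₂ := ℓ₂) (s₂ := s₂)
      (Sum.inr b)
    simpa using this.symm
  -- it is a PM-tree
  have hPMTree : IsPMTree Tg δg := by
    refine ⟨⟨⟨glueG_connected hN₁ hN₂ hT₁tree.isConnected hT₂tree.isConnected,
      glueG_acyclic hT₁tree hT₂tree hN₁ hN₂⟩, ?_⟩, ?_, ?_, ?_⟩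
    · -- cubic
      rintro (a | b)
      · by_cases ha : a.1 = s₁
        · have haa : a = ⟨s₁, (nbr_ne hN₁).symm⟩ := Subtype.ext ha
          rw [haa, hTgdef, glueG_ndeg_inl_s hN₁ hs₂, hdeg_s₁]
          exact Or.inr rfl
        · rw [hTgdef, glueG_ndeg_inl hN₁ a ha]
          exact hT₁deg a.1
      · rw [hndeg_inr b]
        by_cases hb : b.1 = s₂
        · have hbb : b = ⟨s₂, (nbr_ne hN₂).symm⟩ := Subtype.ext hb
          rw [hbb, hTg'def, glueG_ndeg_inl_s hN₂ hs₁, hdeg_s₂]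
          exact Or.inr rfl
        · rw [hTg'def, glueG_ndeg_inl hN₂ b hb]
          exact hT₂deg b.1
    · -- injective
      intro u v huv
      by_cases hu : u ∈ Z <;> by_cases hv : v ∈ Z
      · rw [hδg_mem hu, hδg_mem hv] at huv
        have h2 := hδ₂inj (Subtype.ext_iff.mp (Sum.inr_injective huv))
        exact Subtype.ext_iff.mp (Option.some_injective _ h2)
      · rw [hδg_mem hu, hδg_not hv] at huv
        exact absurd huv (by simp)
      · rw [hδg_not hu, hδg_mem hv] at huv
        exact absurd huv (by simp)
      · rw [hδg_not hu, hδg_not hv] at huv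
        have h2 := hδ₁inj (Subtype.ext_iff.mp (Sum.inl_injective huv))
        exact Subtype.ext_iff.mp (Option.some_injective _ h2)
    · -- every vertex maps to a leaf
      intro v
      by_cases hv : v ∈ Z
      · rw [hδg_mem hv, hndeg_inr, hTg'def, glueG_ndeg_inl hN₂ _ (hδ₂nes _)]
        exact hδ₂leaf _
      · rw [hδg_not hv, hTgdef, glueG_ndeg_inl hN₁ _ (hδ₁nes _)]
        exact hδ₁leaf _
    · -- every leaf is hit
      rintro (a | b) ht
      · have ha : a.1 ≠ s₁ := by
          intro hc
          have haa : a = ⟨s₁, (nbr_ne hN₁).symm⟩ := Subtype.ext hc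
          rw [haa, hTgdef, glueG_ndeg_inl_s hN₁ hs₂, hdeg_s₁] at ht
          omega
        rw [hTgdef, glueG_ndeg_inl hN₁ a ha] at ht
        obtain ⟨x, hx⟩ := hδ₁surj a.1 ht
        match x, hx with
        | none, hx => exact absurd hx.symm a.2
        | some u, hx =>
          refine ⟨u.1, ?_⟩
          rw [hδg_not u.2]
          exact congrArg Sum.inl (Subtype.ext hx)
      · rw [hndeg_inr] at ht
        have hb : b.1 ≠ s₂ := by
          intro hc
          have hbb : b = ⟨s₂, (nbr_ne hN₂).symm⟩ := Subtype.ext hc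
          rw [hbb, hTg'def, glueG_ndeg_inl_s hN₂ hs₁, hdeg_s₂] at ht
          omega
        rw [hTg'def, glueG_ndeg_inl hN₂ b hb] at ht
        obtain ⟨x, hx⟩ := hδ₂surj b.1 ht
        match x, hx with
        | none, hx => exact absurd hx.symm b.2
        | some u, hx =>
          refine ⟨u.1, ?_⟩
          have huZ : u.1 ∈ Z := by
            have := u.2
            rwa [Set.notMem_compl_iff] at this
          rw [hδg_mem huZ]
          exact congrArg Sum.inr (Subtype.ext hx)
  -- side porosity bounds
  have hside₁ : ∀ a b : Fin n₁, T₁.Adj a b →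
      matchingPorosity G (shoreMap Z ⁻¹' treeShore T₁ δ₁ a b) ≤
        decompWidth (contractShore G Z) T₁ δ₁ := by
    intro a b hadj
    have hX : Z ⊆ shoreMap Z ⁻¹' treeShore T₁ δ₁ a b ∨
        Disjoint Z (shoreMap Z ⁻¹' treeShore T₁ δ₁ a b) := by
      by_cases hnone : (none : Option {v : V // v ∉ Z}) ∈ treeShore T₁ δ₁ a b
      · left
        intro z hz
        rw [Set.mem_preimage, shoreMap_of_mem hz]
        exact hnone
      · right
        rw [Set.disjoint_left]
        intro z hz hc
        rw [Set.mem_preimage, shoreMap_of_mem hz] at hc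
        exact hnone hc
    calc matchingPorosity G (shoreMap Z ⁻¹' treeShore T₁ δ₁ a b)
        ≤ matchingPorosity (contractShore G Z)
            (shoreMap Z '' (shoreMap Z ⁻¹' treeShore T₁ δ₁ a b)) :=
          porosity_transfer hZne hZt _ hX
      _ = matchingPorosity (contractShore G Z) (treeShore T₁ δ₁ a b) := by
          rw [Set.image_preimage_eq _ (shoreMap_surjective hZne)]
      _ ≤ _ := decompWidth_bound hadj
  have hside₂ : ∀ a b : Fin n₂, T₂.Adj a b →
      matchingPorosity G (shoreMap Zᶜ ⁻¹' treeShore T₂ δ₂ a b) ≤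
        decompWidth (contractShore G Zᶜ) T₂ δ₂ := by
    intro a b hadj
    have hX : Zᶜ ⊆ shoreMap Zᶜ ⁻¹' treeShore T₂ δ₂ a b ∨
        Disjoint Zᶜ (shoreMap Zᶜ ⁻¹' treeShore T₂ δ₂ a b) := by
      by_cases hnone : (none : Option {v : V // v ∉ Zᶜ}) ∈ treeShore T₂ δ₂ a b
      · left
        intro z hz
        rw [Set.mem_preimage, shoreMap_of_mem hz]
        exact hnone
      · right
        rw [Set.disjoint_left]
        intro z hz hc
        rw [Set.mem_preimage, shoreMap_of_mem hz] at hc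
        exact hnone hc
    calc matchingPorosity G (shoreMap Zᶜ ⁻¹' treeShore T₂ δ₂ a b)
        ≤ matchingPorosity (contractShore G Zᶜ)
            (shoreMap Zᶜ '' (shoreMap Zᶜ ⁻¹' treeShore T₂ δ₂ a b)) :=
          porosity_transfer hZcne (isTightCut_compl hZt) _ hX
      _ = matchingPorosity (contractShore G Zᶜ) (treeShore T₂ δ₂ a b) := by
          rw [Set.image_preimage_eq _ (shoreMap_surjective hZcne)]
      _ ≤ _ := decompWidth_bound hadj
  -- width of the glued decomposition
  have hwidth : decompWidthOn G Tg δg ≤ max (decompWidth (contractShore G Z) T₁ δ₁)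
      (decompWidth (contractShore G Zᶜ) T₂ δ₂) := by
    apply nat_sSup_le
    rintro k ⟨t₁, t₂, hadj, rfl⟩
    rcases t₁ with a | a <;> rcases t₂ with b | b
    · -- inl-inl
      have hadjT : T₁.Adj a.1 b.1 := hadj
      have hshore : treeShore Tg δg (Sum.inl a) (Sum.inl b) =
          shoreMap Z ⁻¹' treeShore T₁ δ₁ a.1 b.1 := by
        ext v
        simp only [treeShore, Set.mem_setOf_eq, Set.mem_preimage]
        by_cases hv : v ∈ Z
        · rw [hδg_mem hv, shoreMap_of_mem hv]
          constructor
          · intro h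
            have := glueG_proj_reach hN₁ h
            simpa using this
          · intro h
            have h1 := glueG_reach_of_left (T₂ := T₂) hN₁ hs₂ (a := a) (b := b) h
            rw [dif_pos rfl, dif_neg a.2] at h1
            have h2 := glueG_reach_right (T₁ := T₁) (ℓ₁ := ℓ₁) (s₁ := s₁) hN₂
              hT₂tree.isConnected (hδ₂ne ⟨v, hvZc hv⟩) {s(Sum.inl a, Sum.inl b)}
              (by intro u w hc; rw [Set.mem_singleton_iff, Sym2.eq_iff] at hc;
                  rcases hc with ⟨h', -⟩ | ⟨h', -⟩ <;> exact absurd h' (by simp))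
            exact h2.trans h1
        · rw [hδg_not hv, shoreMap_of_not_mem hv]
          constructor
          · intro h
            have := glueG_proj_reach hN₁ h
            simpa using this
          · intro h
            have h1 := glueG_reach_of_left (T₂ := T₂) hN₁ hs₂ (a := a) (b := b) h
            rw [dif_neg (hδ₁ne ⟨v, hv⟩), dif_neg a.2] at h1
            exact h1
      rw [hshore]
      exact (hside₁ a.1 b.1 hadjT).trans (le_max_left _ _)
    · -- inl-inr : the bridge
      obtain ⟨ha, hb⟩ : a.1 = s₁ ∧ b.1 = s₂ := hadj
      have haa : a = ⟨s₁, hs₁⟩ := Subtype.ext ha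
      have hbb : b = ⟨s₂, hs₂⟩ := Subtype.ext hb
      rw [haa, hbb]
      have hsetswap : ({s(s₁, ℓ₁)} : Set (Sym2 (Fin n₁))) = {s(ℓ₁, s₁)} := by
        rw [Sym2.eq_swap]
      have hshore : treeShore Tg δg (Sum.inl ⟨s₁, hs₁⟩) (Sum.inr ⟨s₂, hs₂⟩) =
          shoreMap Z ⁻¹' treeShore T₁ δ₁ s₁ ℓ₁ := by
        ext v
        simp only [treeShore, Set.mem_setOf_eq, Set.mem_preimage]
        by_cases hv : v ∈ Z
        · rw [hδg_mem hv, shoreMap_of_mem hv]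
          constructor
          · intro h
            exact absurd h (glueG_bridge_sep (a := ⟨s₁, hs₁⟩) (b := ⟨s₂, hs₂⟩) rfl rfl _ _)
          · intro h
            exfalso
            rw [hsetswap] at h
            exact leafdel_not_reach hT₁tree.IsAcyclic hN₁ h
        · rw [hδg_not hv, shoreMap_of_not_mem hv]
          constructor
          · intro h
            have := glueG_proj_reach_bridge hN₁ hs₂ h
            simpa using this
          · intro h
            rw [hsetswap] at h
            exact glueG_reach_left_leafdel hN₁ (hδ₁ne _) hs₁ h
              {s(Sum.inl ⟨s₁, hs₁⟩, Sum.inr ⟨s₂, hs₂⟩)}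
              (by intro u w hc; rw [Set.mem_singleton_iff, Sym2.eq_iff] at hc;
                  rcases hc with ⟨-, h'⟩ | ⟨h', -⟩ <;> exact absurd h' (by simp))
      rw [hshore]
      exact (hside₁ s₁ ℓ₁ (nbr_adj hN₁).symm).trans (le_max_left _ _)
    · -- inr-inl : the bridge reversed
      obtain ⟨hb, ha⟩ : b.1 = s₁ ∧ a.1 = s₂ := hadj
      have haa : a = ⟨s₂, hs₂⟩ := Subtype.ext ha
      have hbb : b = ⟨s₁, hs₁⟩ := Subtype.ext hb
      rw [haa, hbb]
      have hsetswap : ({s(s₂, ℓ₂)} : Set (Sym2 (Fin n₂))) = {s(ℓ₂, s₂)} := by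
        rw [Sym2.eq_swap]
      have hshore : treeShore Tg δg (Sum.inr ⟨s₂, hs₂⟩) (Sum.inl ⟨s₁, hs₁⟩) =
          shoreMap Zᶜ ⁻¹' treeShore T₂ δ₂ s₂ ℓ₂ := by
        ext v
        simp only [treeShore, Set.mem_setOf_eq, Set.mem_preimage]
        have hswapiff : ∀ w : ({x : Fin n₁ // x ≠ ℓ₁} ⊕ {y : Fin n₂ // y ≠ ℓ₂}),
            (Tg.deleteEdges {s(Sum.inr ⟨s₂, hs₂⟩, Sum.inl ⟨s₁, hs₁⟩)}).Reachable w
              (Sum.inr ⟨s₂, hs₂⟩) ↔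
            (Tg'.deleteEdges {s(Sum.inl ⟨s₂, hs₂⟩, Sum.inr ⟨s₁, hs₁⟩)}).Reachable w.swap
              (Sum.inl ⟨s₂, hs₂⟩) := by
          intro w
          constructor
          · intro h
            have := glueG_swap_reach h
            simpa using this
          · intro h
            have := glueG_swap_reach h
            simpa using this
        by_cases hv : v ∈ Z
        · rw [hδg_mem hv, shoreMap_of_not_mem (hvZc hv), hswapiff]
          simp only [Sum.swap_inr]
          constructor
          · intro h
            have := glueG_proj_reach_bridge hN₂ hs₁ h
            simpa using this
          · intro h
            rw [hsetswap] at h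
            exact glueG_reach_left_leafdel hN₂ (hδ₂ne _) hs₂ h
              {s(Sum.inl ⟨s₂, hs₂⟩, Sum.inr ⟨s₁, hs₁⟩)}
              (by intro u w hc; rw [Set.mem_singleton_iff, Sym2.eq_iff] at hc;
                  rcases hc with ⟨-, h'⟩ | ⟨h', -⟩ <;> exact absurd h' (by simp))
        · rw [hδg_not hv, shoreMap_of_mem ((Set.mem_compl_iff _ _).mpr hv), hswapiff]
          simp only [Sum.swap_inl]
          constructor
          · intro h
            exact absurd h (glueG_bridge_sep (a := ⟨s₂, hs₂⟩) (b := ⟨s₁, hs₁⟩) rfl rfl _ _)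
          · intro h
            exfalso
            rw [hsetswap] at h
            exact leafdel_not_reach hT₂tree.IsAcyclic hN₂ h
      rw [hshore]
      exact (hside₂ s₂ ℓ₂ (nbr_adj hN₂).symm).trans (le_max_right _ _)
    · -- inr-inr
      have hadjT : T₂.Adj a.1 b.1 := hadj
      have hshore : treeShore Tg δg (Sum.inr a) (Sum.inr b) =
          shoreMap Zᶜ ⁻¹' treeShore T₂ δ₂ a.1 b.1 := by
        ext v
        simp only [treeShore, Set.mem_setOf_eq, Set.mem_preimage]
        have hswapiff : ∀ w : ({x : Fin n₁ // x ≠ ℓ₁} ⊕ {y : Fin n₂ // y ≠ ℓ₂}),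
            (Tg.deleteEdges {s(Sum.inr a, Sum.inr b)}).Reachable w (Sum.inr a) ↔
            (Tg'.deleteEdges {s(Sum.inl a, Sum.inl b)}).Reachable w.swap (Sum.inl a) := by
          intro w
          constructor
          · intro h
            have := glueG_swap_reach h
            simpa using this
          · intro h
            have := glueG_swap_reach h
            simpa using this
        by_cases hv : v ∈ Z
        · rw [hδg_mem hv, shoreMap_of_not_mem (hvZc hv), hswapiff]
          simp only [Sum.swap_inr]
          constructor
          · intro h
            have := glueG_proj_reach hN₂ h
            simpa using this
          · intro h
            have h1 := glueG_reach_of_left (T₂ := T₁) hN₂ hs₁ (a := a) (b := b) h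
            rw [dif_neg (hδ₂ne ⟨v, hvZc hv⟩), dif_neg a.2] at h1
            exact h1
        · rw [hδg_not hv, shoreMap_of_mem ((Set.mem_compl_iff _ _).mpr hv), hswapiff]
          simp only [Sum.swap_inl]
          constructor
          · intro h
            have := glueG_proj_reach hN₂ h
            simpa using this
          · intro h
            have h1 := glueG_reach_of_left (T₂ := T₁) hN₂ hs₁ (a := a) (b := b) h
            rw [dif_pos rfl, dif_neg a.2] at h1
            have h2 := glueG_reach_right (T₁ := T₂) (ℓ₁ := ℓ₂) (s₁ := s₂) hN₁
              hT₁tree.isConnected (hδ₁ne ⟨v, hv⟩) {s(Sum.inl a, Sum.inl b)}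
              (by intro u w hc; rw [Set.mem_singleton_iff, Sym2.eq_iff] at hc;
                  rcases hc with ⟨h', -⟩ | ⟨h', -⟩ <;> exact absurd h' (by simp))
            exact h2.trans h1
      rw [hshore]
      exact (hside₂ a.1 b.1 hadjT).trans (le_max_right _ _)
  exact (pmw_le_decompWidthOn G Tg δg hPMTree).trans hwidth

end KeyLemma
section MainAssembly

lemma card_option_shore {V : Type} [Finite V] (Z : Set V) :
    Nat.card (Option {v : V // v ∉ Z}) = Zᶜ.ncard + 1 := by
  haveI := Fintype.ofFinite {v : V // v ∉ Z}
  rw [Nat.card_eq_fintype_card, Fintype.card_option]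
  have hval : Nat.card {v : V // v ∉ Z} = Zᶜ.ncard := Nat.card_coe_set_eq Zᶜ
  rw [← hval, Nat.card_eq_fintype_card]

lemma main_aux (N : ℕ) : ∀ (V : Type) [Finite V] (G : SimpleGraph V), Nat.card V ≤ N →
    ∀ k : ℕ, (∀ H : FinGraph, IsBrickOrBraceOf H ⟨G⟩ → pmw H.graph ≤ k) → pmw G ≤ k := by
  induction N with
  | zero =>
    intro V _ G hcard k h
    apply h ⟨G⟩ (IsBrickOrBraceOf.base _ ?_)
    intro Z hZ
    have h2 := hZ.2.1
    have hle : Z.ncard ≤ Nat.card V := by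
      rw [← Set.ncard_univ]
      exact Set.ncard_le_ncard (Set.subset_univ _) Set.finite_univ
    omega
  | succ N IH =>
    intro V _ G hcard k h
    by_cases hcut : ∃ Z : Set V, IsNontrivialTightCut G Z
    · obtain ⟨Z, hZt, hZ2, hZc2⟩ := hcut
      have hsum : Z.ncard + Zᶜ.ncard = Nat.card V := Set.ncard_add_ncard_compl Z
      have hco₁ : Nat.card (Option {v : V // v ∉ Z}) = Zᶜ.ncard + 1 := card_option_shore Z
      have hco₂ : Nat.card (Option {v : V // v ∉ Zᶜ}) = Z.ncard + 1 := by
        have := card_option_shore Zᶜ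
        rwa [compl_compl] at this
      have h₁ : pmw (contractShore G Z) ≤ k := by
        apply IH _ (contractShore G Z) (by omega) k
        intro H hH
        exact h H (IsBrickOrBraceOf.step H ⟨G⟩ Z ⟨hZt, hZ2, hZc2⟩ hH)
      have h₂ : pmw (contractShore G Zᶜ) ≤ k := by
        apply IH _ (contractShore G Zᶜ) (by omega) k
        intro H hH
        refine h H (IsBrickOrBraceOf.step H ⟨G⟩ Zᶜ ⟨isTightCut_compl hZt, hZc2, ?_⟩ hH)
        rw [compl_compl]
        exact hZ2
      obtain ⟨n₁, T₁, δ₁, hd₁, hw₁⟩ :=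
        Nat.sInf_mem (pmw_set_nonempty (contractShore G Z) (by omega))
      obtain ⟨n₂, T₂, δ₂, hd₂, hw₂⟩ :=
        Nat.sInf_mem (pmw_set_nonempty (contractShore G Zᶜ) (by omega))
      have hw₁' : decompWidth (contractShore G Z) T₁ δ₁ = pmw (contractShore G Z) := hw₁
      have hw₂' : decompWidth (contractShore G Zᶜ) T₂ δ₂ = pmw (contractShore G Zᶜ) := hw₂
      have hkey := glue_decomp G Z hZt hZ2 hZc2 hd₁ hd₂
      rw [hw₁', hw₂'] at hkey
      exact hkey.trans (max_le h₁ h₂)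
    · push_neg at hcut
      exact h ⟨G⟩ (IsBrickOrBraceOf.base _ hcut)

end MainAssembly

/-- The perfect matching width of a matching covered graph is at most the
maximum of the perfect matching widths of its bricks and braces. -/
theorem pmw_le_max_bricks_braces {V : Type} [Finite V] (G : SimpleGraph V)
    (hG : MatchingCovered G) (k : ℕ)
    (h : ∀ H : FinGraph, IsBrickOrBraceOf H ⟨G⟩ → pmw H.graph ≤ k) :
    pmw G ≤ k :=
  main_aux (Nat.card V) V G le_rfl k h
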